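/- arXiv:1208.0161 — 5 statements merged into one kernel-verified Lean document; each statement's English description precedes it below -/
import Mathlib

section
/- Let f : {±1}^n → ℝ be a polynomial of degree at most d. Then for any q ≥ 2, ‖f‖_q ≤ (q−1)^{d/2} ‖f‖_2, where the norms are the normalized ℓ_p norms on the boolean cube. -/
noncomputable section

/-- The character `χ_S(x) = ∏_{i ∈ S} x_i` on the boolean cube, with `true ↦ -1`, `false ↦ 1`. -/
def cubeChar {n : ℕ} (S : Finset (Fin n)) (x : Fin n → Bool) : ℝ :=
  ∏ i ∈ S, (if x i then -1 else 1)

/-- The Fourier coefficient `f̂(S)` of `f : {±1}ⁿ → ℝ`. -/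
def cubeFourier {n : ℕ} (f : (Fin n → Bool) → ℝ) (S : Finset (Fin n)) : ℝ :=
  (2 ^ n : ℝ)⁻¹ * ∑ x : Fin n → Bool, f x * cubeChar S x

/-- The normalised ℓ_p norm `‖f‖_p = (2^{-n} ∑_x |f(x)|^p)^{1/p}` on the boolean cube. -/
def cubeNorm {n : ℕ} (p : ℝ) (f : (Fin n → Bool) → ℝ) : ℝ :=
  ((2 ^ n : ℝ)⁻¹ * ∑ x : Fin n → Bool, |f x| ^ p) ^ (1 / p)

open Finset Real


lemma cubeChar_sq {n : ℕ} (S : Finset (Fin n)) (x : Fin n → Bool) :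
    cubeChar S x * cubeChar S x = 1 := by
  unfold cubeChar
  rw [← Finset.prod_mul_distrib]
  apply Finset.prod_eq_one
  intro i _
  by_cases h : x i <;> simp [h]

lemma cubeChar_mul {n : ℕ} (S T : Finset (Fin n)) (x : Fin n → Bool) :
    cubeChar S x * cubeChar T x = cubeChar (symmDiff S T) x := by
  unfold cubeChar
  rw [← Finset.prod_union_inter]
  have hu : S ∪ T = (symmDiff S T) ∪ (S ∩ T) := by
    ext i; simp [Finset.mem_symmDiff]; tauto
  have hd : Disjoint (symmDiff S T) (S ∩ T) := by
    simp [Finset.disjoint_left, Finset.mem_symmDiff]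
    tauto
  rw [hu, Finset.prod_union hd, mul_assoc, ← Finset.prod_mul_distrib]
  have : ∀ i ∈ S ∩ T, ((if x i then (-1:ℝ) else 1) * (if x i then -1 else 1)) = 1 := by
    intro i _; by_cases h : x i <;> simp [h]
  rw [Finset.prod_congr rfl this, Finset.prod_const_one, mul_one]

lemma sum_cubeChar {n : ℕ} (S : Finset (Fin n)) :
    ∑ x : Fin n → Bool, cubeChar S x = if S = ∅ then (2^n : ℝ) else 0 := by
  by_cases hS : S = ∅
  · simp [hS, cubeChar, Finset.card_univ]
  · simp only [hS, if_false]
    obtain ⟨i, hi⟩ := Finset.nonempty_iff_ne_empty.2 hS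
    apply Finset.sum_ninvolution (g := fun x => Function.update x i (!x i))
    · intro x
      have h1 : cubeChar S (Function.update x i (!x i)) = -cubeChar S x := by
        unfold cubeChar
        rw [← Finset.mul_prod_erase S _ hi, ← Finset.mul_prod_erase S _ hi]
        have h2 : ∀ j ∈ S.erase i,
            (if Function.update x i (!x i) j then (-1:ℝ) else 1) = if x j then -1 else 1 := by
          intro j hj
          rw [Function.update_of_ne (Finset.ne_of_mem_erase hj)]
        rw [Finset.prod_congr rfl h2, Function.update_self]
        by_cases h : x i <;> simp [h]
      rw [h1]; ring
    · intro x hx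
      intro h
      have := congrFun h i
      simp at this
    · intro x; exact Finset.mem_univ _
    · intro x
      ext j
      by_cases h : j = i
      · subst h; simp
      · simp [Function.update_of_ne h]

lemma sum_cubeChar_mul {n : ℕ} (S T : Finset (Fin n)) :
    ∑ x : Fin n → Bool, cubeChar S x * cubeChar T x = if S = T then (2^n : ℝ) else 0 := by
  have : ∀ x, cubeChar S x * cubeChar T x = cubeChar (symmDiff S T) x := fun x => cubeChar_mul S T x
  rw [Finset.sum_congr rfl fun x _ => this x, sum_cubeChar]
  congr 1
  simp [symmDiff_eq_bot]

lemma sum_char_char {n : ℕ} (x y : Fin n → Bool) :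
    ∑ S : Finset (Fin n), cubeChar S y * cubeChar S x = if y = x then (2^n : ℝ) else 0 := by
  have h1 : ∀ S : Finset (Fin n), cubeChar S y * cubeChar S x
      = ∏ i ∈ S, ((if y i then (-1:ℝ) else 1) * (if x i then -1 else 1)) := by
    intro S; unfold cubeChar; rw [Finset.prod_mul_distrib]
  rw [Finset.sum_congr rfl fun S _ => h1 S]
  have h2 : ∑ S : Finset (Fin n), ∏ i ∈ S, ((if y i then (-1:ℝ) else 1) * (if x i then -1 else 1))
      = ∏ i : Fin n, (((if y i then (-1:ℝ) else 1) * (if x i then -1 else 1)) + 1) := by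
    rw [Finset.prod_add]
    rw [Finset.powerset_univ]
    apply Finset.sum_congr rfl
    intro S _
    simp
  rw [h2]
  by_cases hxy : y = x
  · subst hxy
    have : ∀ i : Fin n, (((if y i then (-1:ℝ) else 1) * (if y i then -1 else 1)) + 1) = 2 := by
      intro i; by_cases h : y i <;> simp [h] <;> norm_num
    rw [Finset.prod_congr rfl fun i _ => this i, Finset.prod_const, if_pos rfl, Finset.card_univ]
    simp
  · rw [if_neg hxy]
    obtain ⟨i, hi⟩ : ∃ i, y i ≠ x i := by
      by_contra h
      push_neg at h
      exact hxy (funext h)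
    apply Finset.prod_eq_zero (Finset.mem_univ i)
    rcases Bool.eq_false_or_eq_true (y i) with h | h <;>
      rcases Bool.eq_false_or_eq_true (x i) with h' | h' <;>
      simp [h, h'] at hi ⊢ <;> norm_num

lemma cube_inversion {n : ℕ} (f : (Fin n → Bool) → ℝ) (x : Fin n → Bool) :
    ∑ S : Finset (Fin n), cubeFourier f S * cubeChar S x = f x := by
  unfold cubeFourier
  have h1 : ∀ S : Finset (Fin n), (2 ^ n : ℝ)⁻¹ * (∑ y : Fin n → Bool, f y * cubeChar S y) * cubeChar S x
      = (2 ^ n : ℝ)⁻¹ * ∑ y : Fin n → Bool, f y * (cubeChar S y * cubeChar S x) := by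
    intro S
    rw [mul_assoc, Finset.sum_mul]
    congr 1
    apply Finset.sum_congr rfl
    intro y _
    ring
  rw [Finset.sum_congr rfl fun S _ => h1 S, ← Finset.mul_sum, Finset.sum_comm]
  have h2 : ∀ y : Fin n → Bool, ∑ S : Finset (Fin n), f y * (cubeChar S y * cubeChar S x)
      = f y * (if y = x then (2^n : ℝ) else 0) := by
    intro y
    rw [← Finset.mul_sum, sum_char_char]
  rw [Finset.sum_congr rfl fun y _ => h2 y]
  have h3 : ∑ y : Fin n → Bool, (f y * if y = x then (2^n:ℝ) else 0)
      = f x * (2^n:ℝ) := by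
    rw [Finset.sum_congr rfl (fun y _ => by rw [mul_ite, mul_zero] :
      ∀ y ∈ Finset.univ, (f y * if y = x then (2^n:ℝ) else 0) = if y = x then f y * 2^n else 0)]
    rw [Finset.sum_ite_eq' Finset.univ x (fun y => f y * (2^n:ℝ))]
    simp
  rw [h3]
  have : (2:ℝ)^n ≠ 0 := by positivity
  field_simp

lemma cube_plancherel {n : ℕ} (f g : (Fin n → Bool) → ℝ) :
    ∑ S : Finset (Fin n), cubeFourier f S * cubeFourier g S
      = (2 ^ n : ℝ)⁻¹ * ∑ x : Fin n → Bool, f x * g x := by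
  have h1 : ∀ S : Finset (Fin n), cubeFourier f S * cubeFourier g S
      = (2 ^ n : ℝ)⁻¹ * ∑ x : Fin n → Bool, g x * (cubeFourier f S * cubeChar S x) := by
    intro S
    conv_lhs => rw [show cubeFourier g S = (2 ^ n : ℝ)⁻¹ * ∑ x : Fin n → Bool, g x * cubeChar S x from rfl]
    rw [Finset.mul_sum, Finset.mul_sum, Finset.mul_sum]
    apply Finset.sum_congr rfl
    intro x _
    ring
  rw [Finset.sum_congr rfl fun S _ => h1 S, ← Finset.mul_sum, Finset.sum_comm]
  congr 1
  apply Finset.sum_congr rfl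
  intro x _
  rw [← Finset.mul_sum, cube_inversion]
  ring

-- B1 : key derivative bound
lemma two_mul_le_rpow_sub {r t : ℝ} (hr0 : 0 ≤ r) (hr1 : r ≤ 1) (ht0 : 0 ≤ t) (ht1 : t ≤ 1) :
    2*r*t ≤ (1+t)^r - (1-t)^r := by
  rcases eq_or_lt_of_le hr0 with hr | hr
  · simp [← hr]
  rcases eq_or_lt_of_le ht1 with ht | ht
  · -- t = 1
    subst ht
    rw [show (1:ℝ)-1 = 0 by ring, Real.zero_rpow (ne_of_gt hr), sub_zero]
    have h1 : ((1:ℝ)+1)^(1-r) ≤ 1 + (1-r)*1 :=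
      rpow_one_add_le_one_add_mul_self (by norm_num) (by linarith) (by linarith)
    have h2 : ((1:ℝ)+1)^r * ((1:ℝ)+1)^(1-r) = 2 := by
      rw [← Real.rpow_add (by norm_num)]
      norm_num
    have h3 : (0:ℝ) < ((1:ℝ)+1)^(1-r) := Real.rpow_pos_of_pos (by norm_num) _
    have h4 : ((1:ℝ)+1)^r ≥ 2 / (2-r) := by
      rw [ge_iff_le, div_le_iff₀ (by linarith)]
      nlinarith
    have h5 : 2 / (2-r) ≥ 2*r := by
      rw [ge_iff_le, le_div_iff₀ (by linarith)]
      nlinarith [sq_nonneg (r-1)]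
    calc 2*r*1 = 2*r := by ring
    _ ≤ 2/(2-r) := h5
    _ ≤ ((1:ℝ)+1)^r := h4
  -- t < 1
  set F : ℝ → ℝ := fun s => (1+s)^r - (1-s)^r - 2*r*s with hF
  have key : ∀ s ∈ Set.Ioo (-1:ℝ) 1, HasDerivAt F (r*(1+s)^(r-1) + r*(1-s)^(r-1) - 2*r) s := by
    intro s hs
    obtain ⟨hs1, hs2⟩ := hs
    have ha : HasDerivAt (fun s : ℝ => 1+s) 1 s := by
      simpa using (hasDerivAt_id s).const_add 1
    have hb : HasDerivAt (fun s : ℝ => 1-s) (-1) s := by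
      simpa using (hasDerivAt_id s).const_sub 1
    have h1 : HasDerivAt (fun s : ℝ => (1+s)^r) (r*(1+s)^(r-1)*1) s := by
      exact (Real.hasDerivAt_rpow_const (p := r) (Or.inl (by linarith))).comp s ha
    have h2 : HasDerivAt (fun s : ℝ => (1-s)^r) (r*(1-s)^(r-1)*(-1)) s := by
      exact (Real.hasDerivAt_rpow_const (p := r) (Or.inl (by linarith))).comp s hb
    have h3 : HasDerivAt (fun s : ℝ => 2*r*s) (2*r) s := by
      simpa using (hasDerivAt_id s).const_mul (2*r)
    have := (h1.sub h2).sub h3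
    refine this.congr_deriv ?_
    ring
  have hmono : MonotoneOn F (Set.Icc 0 t) := by
    apply monotoneOn_of_deriv_nonneg (convex_Icc 0 t)
    · -- continuity
      have c1 : Continuous (fun s : ℝ => (1+s)^r) :=
        (Real.continuous_rpow_const hr0).comp (continuous_const.add continuous_id)
      have c2 : Continuous (fun s : ℝ => (1-s)^r) :=
        (Real.continuous_rpow_const hr0).comp (continuous_const.sub continuous_id)
      exact ((c1.sub c2).sub (continuous_const.mul continuous_id)).continuousOn
    · intro s hs
      rw [interior_Icc] at hs
      exact ((key s ⟨by linarith [hs.1], by linarith [hs.2]⟩).differentiableAt).differentiableWithinAt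
    · intro s hs
      rw [interior_Icc] at hs
      obtain ⟨hs1, hs2⟩ := hs
      have hd := key s ⟨by linarith, by linarith⟩
      rw [hd.deriv]
      have hX : (0:ℝ) < (1+s)^(r-1) := Real.rpow_pos_of_pos (by linarith) _
      have hY : (0:ℝ) < (1-s)^(r-1) := Real.rpow_pos_of_pos (by linarith) _
      have hXY : 1 ≤ (1+s)^(r-1) * (1-s)^(r-1) := by
        rw [← Real.mul_rpow (by linarith) (by linarith)]
        apply Real.one_le_rpow_of_pos_of_le_one_of_nonpos
        · nlinarith
        · nlinarith
        · linarith
      nlinarith [sq_nonneg ((1+s)^(r-1) - (1-s)^(r-1))]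
  have h0 : F 0 = 0 := by
    simp [hF]
  have := hmono (Set.left_mem_Icc.2 ht0) (Set.right_mem_Icc.2 ht0) ht0
  rw [h0] at this
  simp only [hF] at this
  linarith

lemma rpow_add_rpow_lower {p t : ℝ} (hp1 : 1 ≤ p) (hp2 : p ≤ 2) (ht0 : 0 ≤ t) (ht1 : t ≤ 1) :
    2 + p*(p-1)*t^2 ≤ (1+t)^p + (1-t)^p := by
  set H : ℝ → ℝ := fun s => (1+s)^p + (1-s)^p - 2 - p*(p-1)*s^2 with hH
  have key : ∀ s : ℝ, HasDerivAt H (p*(1+s)^(p-1) - p*(1-s)^(p-1) - 2*p*(p-1)*s) s := by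
    intro s
    have ha : HasDerivAt (fun s : ℝ => 1+s) 1 s := by
      simpa using (hasDerivAt_id s).const_add 1
    have hb : HasDerivAt (fun s : ℝ => 1-s) (-1) s := by
      simpa using (hasDerivAt_id s).const_sub 1
    have h1 : HasDerivAt (fun s : ℝ => (1+s)^p) (p*(1+s)^(p-1)*1) s :=
      (Real.hasDerivAt_rpow_const (p := p) (Or.inr hp1)).comp s ha
    have h2 : HasDerivAt (fun s : ℝ => (1-s)^p) (p*(1-s)^(p-1)*(-1)) s :=
      (Real.hasDerivAt_rpow_const (p := p) (Or.inr hp1)).comp s hb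
    have h3 : HasDerivAt (fun s : ℝ => p*(p-1)*s^2) (p*(p-1)*(2*s)) s := by
      simpa using ((hasDerivAt_pow 2 s).const_mul (p*(p-1)))
    have := ((h1.add h2).sub_const 2).sub h3
    refine this.congr_deriv ?_
    push_cast
    ring
  have hmono : MonotoneOn H (Set.Icc 0 1) := by
    apply monotoneOn_of_deriv_nonneg (convex_Icc 0 1)
    · exact (Continuous.continuousOn (by
        exact continuous_iff_continuousAt.2 fun s => (key s).continuousAt))
    · intro s hs
      exact (key s).differentiableAt.differentiableWithinAt
    · intro s hs
      rw [interior_Icc] at hs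
      obtain ⟨hs1, hs2⟩ := hs
      rw [(key s).deriv]
      have hB1 := two_mul_le_rpow_sub (r := p-1) (t := s) (by linarith) (by linarith)
        (le_of_lt hs1) (le_of_lt hs2)
      have hp0 : (0:ℝ) < p := by linarith
      nlinarith
  have h0 : H 0 = 0 := by norm_num [hH]
  have := hmono (Set.left_mem_Icc.2 (by norm_num)) (Set.mem_Icc.2 ⟨ht0, ht1⟩) ht0
  rw [h0] at this
  simp only [hH] at this
  linarith

lemma two_point_unit {p t : ℝ} (hp1 : 1 ≤ p) (hp2 : p ≤ 2) (ht0 : 0 ≤ t) (ht1 : t ≤ 1) :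
    (1+(p-1)*t^2)^(p/2) ≤ ((1+t)^p + (1-t)^p)/2 := by
  have h1 : (1+(p-1)*t^2)^(p/2) ≤ 1 + (p/2)*((p-1)*t^2) := by
    apply rpow_one_add_le_one_add_mul_self
    · nlinarith
    · linarith
    · linarith
  have h2 := rpow_add_rpow_lower hp1 hp2 ht0 ht1
  linarith

lemma two_point_aux {p a b : ℝ} (hp1 : 1 ≤ p) (hp2 : p ≤ 2) (hb : 0 ≤ b) (hba : b ≤ a) :
    (a^2+(p-1)*b^2)^(p/2) ≤ ((a+b)^p + (a-b)^p)/2 := by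
  rcases eq_or_lt_of_le (hb.trans hba) with ha | ha
  · have ha' : a = 0 := ha.symm
    have hb0 : b = 0 := le_antisymm (ha' ▸ hba) hb
    subst ha'; subst hb0
    rw [show (0:ℝ)^2 + (p-1)*0^2 = 0 by ring, show (0:ℝ)+0 = 0 by ring,
      show (0:ℝ)-0 = 0 by ring, Real.zero_rpow (by positivity),
      Real.zero_rpow (by positivity)]
    norm_num
  · set t := b/a with htdef
    have ht0 : 0 ≤ t := div_nonneg hb (le_of_lt ha)
    have ht1 : t ≤ 1 := (div_le_one ha).2 hba
    have key := two_point_unit hp1 hp2 ht0 ht1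
    have hab : a + b = a*(1+t) := by rw [htdef]; field_simp
    have hab' : a - b = a*(1-t) := by rw [htdef]; field_simp
    have e1 : (a+b)^p = a^p * (1+t)^p := by
      rw [hab, Real.mul_rpow (le_of_lt ha) (by linarith)]
    have e2 : (a-b)^p = a^p * (1-t)^p := by
      rw [hab', Real.mul_rpow (le_of_lt ha) (by linarith)]
    have e3 : a^2+(p-1)*b^2 = a^2*(1+(p-1)*t^2) := by
      rw [htdef]; field_simp; try ring
    have e4 : (a^2+(p-1)*b^2)^(p/2) = a^p * (1+(p-1)*t^2)^(p/2) := by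
      rw [e3, Real.mul_rpow (by positivity) (by nlinarith)]
      congr 1
      rw [← Real.rpow_natCast a 2, ← Real.rpow_mul (le_of_lt ha),
        show ((2:ℕ):ℝ)*(p/2) = p by push_cast; ring]
    rw [e1, e2, e4]
    have hap : (0:ℝ) < a^p := Real.rpow_pos_of_pos ha p
    calc a^p * (1+(p-1)*t^2)^(p/2) ≤ a^p * (((1+t)^p + (1-t)^p)/2) :=
          mul_le_mul_of_nonneg_left key (le_of_lt hap)
    _ = (a^p * (1+t)^p + a^p * (1-t)^p)/2 := by ring

lemma two_point_aux2 {p a b : ℝ} (hp1 : 1 ≤ p) (hp2 : p ≤ 2) (hba : |b| ≤ |a|) :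
    (a^2+(p-1)*b^2)^(p/2) ≤ (|a+b|^p + |a-b|^p)/2 := by
  have key := two_point_aux hp1 hp2 (abs_nonneg b) hba
  rw [show a^2 = |a|^2 from (sq_abs a).symm, show b^2 = |b|^2 from (sq_abs b).symm]
  have hswap : |a|+|b| = |a+b| ∧ |a|-|b| = |a-b| ∨ |a|+|b| = |a-b| ∧ |a|-|b| = |a+b| := by
    rcases le_total 0 a with ha | ha <;> rcases le_total 0 b with hb | hb
    · rw [abs_of_nonneg ha, abs_of_nonneg hb] at hba
      left
      rw [abs_of_nonneg ha, abs_of_nonneg hb,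
        abs_of_nonneg (show (0:ℝ) ≤ a+b by linarith), abs_of_nonneg (show (0:ℝ) ≤ a-b by linarith)]
      exact ⟨rfl, rfl⟩
    · rw [abs_of_nonneg ha, abs_of_nonpos hb] at hba
      right
      rw [abs_of_nonneg ha, abs_of_nonpos hb,
        abs_of_nonneg (show (0:ℝ) ≤ a+b by linarith), abs_of_nonneg (show (0:ℝ) ≤ a-b by linarith)]
      constructor <;> ring
    · rw [abs_of_nonpos ha, abs_of_nonneg hb] at hba
      right
      rw [abs_of_nonpos ha, abs_of_nonneg hb,
        abs_of_nonpos (show a+b ≤ (0:ℝ) by linarith), abs_of_nonpos (show a-b ≤ (0:ℝ) by linarith)]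
      constructor <;> ring
    · rw [abs_of_nonpos ha, abs_of_nonpos hb] at hba
      left
      rw [abs_of_nonpos ha, abs_of_nonpos hb,
        abs_of_nonpos (show a+b ≤ (0:ℝ) by linarith), abs_of_nonpos (show a-b ≤ (0:ℝ) by linarith)]
      constructor <;> ring
  rcases hswap with ⟨h1, h2⟩ | ⟨h1, h2⟩
  · rw [← h1, ← h2]; exact key
  · rw [← h1, ← h2]; linarith [key]

lemma two_point {p a b : ℝ} (hp1 : 1 ≤ p) (hp2 : p ≤ 2) :
    (a^2+(p-1)*b^2)^(p/2) ≤ (|a+b|^p + |a-b|^p)/2 := by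
  rcases le_total |b| |a| with h | h
  · exact two_point_aux2 hp1 hp2 h
  · have key := two_point_aux2 (a := b) (b := a) hp1 hp2 h
    rw [show b + a = a + b by ring, show |b - a| = |a - b| from abs_sub_comm b a] at key
    refine le_trans ?_ key
    apply Real.rpow_le_rpow (by nlinarith) ?_ (by linarith)
    have h2 : a^2 ≤ b^2 := by
      rw [← sq_abs a, ← sq_abs b]
      exact pow_le_pow_left₀ (abs_nonneg a) h 2
    nlinarith

lemma ellr_triangle {ι : Type*} (s : Finset ι) (u v : ι → ℝ) (hu : ∀ i, 0 ≤ u i)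
    (hv : ∀ i, 0 ≤ v i) {r : ℝ} (hr : 1 ≤ r) :
    ((∑ i ∈ s, u i)^r + (∑ i ∈ s, v i)^r)^(1/r) ≤ ∑ i ∈ s, (u i^r + v i^r)^(1/r) := by
  classical
  have hr0 : r ≠ 0 := by positivity
  induction s using Finset.induction_on with
  | empty =>
    simp [Real.zero_rpow hr0, Real.zero_rpow (inv_ne_zero hr0), one_div]
  | insert a s' ha ih =>
    rw [Finset.sum_insert ha, Finset.sum_insert ha, Finset.sum_insert ha]
    set U := ∑ i ∈ s', u i with hU
    set V := ∑ i ∈ s', v i with hV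
    have hU0 : 0 ≤ U := Finset.sum_nonneg fun i _ => hu i
    have hV0 : 0 ≤ V := Finset.sum_nonneg fun i _ => hv i
    have lp := Real.Lp_add_le (s := (Finset.univ : Finset Bool))
      (f := fun b => if b then u a else v a) (g := fun b => if b then U else V) (p := r) hr
    simp only [Fintype.sum_bool, Bool.false_eq_true, if_true, if_false] at lp
    rw [abs_of_nonneg (add_nonneg (hu a) hU0), abs_of_nonneg (add_nonneg (hv a) hV0),
      abs_of_nonneg (hu a), abs_of_nonneg (hv a), abs_of_nonneg hU0, abs_of_nonneg hV0] at lp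

    calc ((u a + U)^r + (v a + V)^r)^(1/r)
        ≤ (u a^r + v a^r)^(1/r) + (U^r + V^r)^(1/r) := lp
    _ ≤ (u a^r + v a^r)^(1/r) + ∑ i ∈ s', (u i^r + v i^r)^(1/r) := by
        exact add_le_add_right ih _
    _ = _ := rfl

lemma sum_pi_succ {n : ℕ} {M : Type*} [AddCommMonoid M] (F : (Fin (n+1) → Bool) → M) :
    ∑ x : Fin (n+1) → Bool, F x
      = ∑ y : Fin n → Bool, (F (Fin.cons false y) + F (Fin.cons true y)) := by
  rw [← Equiv.sum_comp (Fin.consEquiv (fun _ => Bool)) F, Fintype.sum_prod_type]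
  rw [Fintype.sum_bool]
  rw [← Finset.sum_add_distrib]
  apply Finset.sum_congr rfl
  intro y _
  rw [add_comm]
  rfl

lemma map_preimage_succ {n : ℕ} {T : Finset (Fin (n+1))}
    (hT : T ⊆ (univ : Finset (Fin n)).map (Fin.succEmb n)) :
    (T.preimage Fin.succ ((Fin.succ_injective n).injOn)).map (Fin.succEmb n) = T := by
  ext a
  constructor
  · intro ha
    obtain ⟨b, hb, hba⟩ := Finset.mem_map.1 ha
    rw [Finset.mem_preimage] at hb
    have hb' : (Fin.succEmb n) b ∈ T := hb
    rwa [hba] at hb'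
  · intro ha
    obtain ⟨b, _, hba⟩ := Finset.mem_map.1 (hT ha)
    refine Finset.mem_map.2 ⟨b, ?_, hba⟩
    rw [Finset.mem_preimage]
    show b.succ ∈ T
    rw [show b.succ = a from hba]
    exact ha

lemma sum_finset_succ {n : ℕ} {M : Type*} [AddCommMonoid M] (F : Finset (Fin (n+1)) → M) :
    ∑ T : Finset (Fin (n+1)), F T
      = ∑ S : Finset (Fin n), F (S.map (Fin.succEmb n))
        + ∑ S : Finset (Fin n), F (insert 0 (S.map (Fin.succEmb n))) := by
  have h0 : (0 : Fin (n+1)) ∉ (univ : Finset (Fin n)).map (Fin.succEmb n) := by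
    simp [Fin.coe_succEmb]
  have subsum : ∀ (G : Finset (Fin (n+1)) → M),
      ∑ T ∈ ((univ : Finset (Fin n)).map (Fin.succEmb n)).powerset, G T
        = ∑ S : Finset (Fin n), G (S.map (Fin.succEmb n)) := by
    intro G
    apply Finset.sum_nbij' (i := fun T => T.preimage Fin.succ ((Fin.succ_injective n).injOn))
      (j := fun S => S.map (Fin.succEmb n))
    · intro T hT
      exact Finset.mem_univ _
    · intro S _
      rw [Finset.mem_powerset]
      exact Finset.map_subset_map.2 (Finset.subset_univ S)
    · intro T hT
      exact map_preimage_succ (Finset.mem_powerset.1 hT)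
    · intro S _
      exact Finset.preimage_map _ _
    · intro T hT
      rw [map_preimage_succ (Finset.mem_powerset.1 hT)]
  have huniv : (univ : Finset (Fin (n+1)))
      = Finset.cons 0 ((univ : Finset (Fin n)).map (Fin.succEmb n)) h0 := Fin.univ_succ n
  conv_lhs => rw [← Finset.powerset_univ, huniv, Finset.cons_eq_insert,
    Finset.sum_powerset_insert h0]
  rw [subsum, subsum (fun T => F (insert 0 T))]

section step
variable {n : ℕ} (g : (Fin (n+1) → Bool) → ℝ)

private def gEven : (Fin n → Bool) → ℝ := fun y => (g (Fin.cons false y) + g (Fin.cons true y))/2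
private def gOdd : (Fin n → Bool) → ℝ := fun y => (g (Fin.cons false y) - g (Fin.cons true y))/2

lemma g_cons_false (y : Fin n → Bool) : g (Fin.cons false y) = gEven g y + gOdd g y := by
  unfold gEven gOdd; ring

lemma g_cons_true (y : Fin n → Bool) : g (Fin.cons true y) = gEven g y - gOdd g y := by
  unfold gEven gOdd; ring

lemma char_map_succ (S : Finset (Fin n)) (b : Bool) (y : Fin n → Bool) :
    cubeChar (S.map (Fin.succEmb n)) (Fin.cons b y) = cubeChar S y := by
  unfold cubeChar
  rw [Finset.prod_map]
  apply Finset.prod_congr rfl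
  intro i _
  simp only [Fin.coe_succEmb, Fin.cons_succ]

lemma zero_not_mem_map (S : Finset (Fin n)) : (0 : Fin (n+1)) ∉ S.map (Fin.succEmb n) := by
  rw [Finset.mem_map]
  rintro ⟨b, _, hb⟩
  exact Fin.succ_ne_zero b hb

lemma char_insert_zero (S : Finset (Fin n)) (b : Bool) (y : Fin n → Bool) :
    cubeChar (insert 0 (S.map (Fin.succEmb n))) (Fin.cons b y)
      = (if b then -1 else 1) * cubeChar S y := by
  unfold cubeChar
  rw [Finset.prod_insert (zero_not_mem_map S), Fin.cons_zero]
  congr 1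
  rw [Finset.prod_map]
  apply Finset.prod_congr rfl
  intro i _
  simp only [Fin.coe_succEmb, Fin.cons_succ]

lemma fourier_map_succ (S : Finset (Fin n)) :
    cubeFourier g (S.map (Fin.succEmb n)) = cubeFourier (gEven g) S := by
  unfold cubeFourier
  rw [sum_pi_succ (fun x => g x * cubeChar (S.map (Fin.succEmb n)) x)]
  have : ∀ y : Fin n → Bool,
      g (Fin.cons false y) * cubeChar (S.map (Fin.succEmb n)) (Fin.cons false y)
        + g (Fin.cons true y) * cubeChar (S.map (Fin.succEmb n)) (Fin.cons true y)
      = 2 * (gEven g y * cubeChar S y) := by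
    intro y
    rw [char_map_succ, char_map_succ, g_cons_false g, g_cons_true g]
    ring
  rw [Finset.sum_congr rfl fun y _ => this y, ← Finset.mul_sum]
  rw [show ((2:ℝ)^(n+1))⁻¹ * (2 * ∑ y : Fin n → Bool, gEven g y * cubeChar S y)
    = ((2:ℝ)^(n+1))⁻¹ * 2 * ∑ y : Fin n → Bool, gEven g y * cubeChar S y by ring]
  congr 1
  rw [pow_succ]
  field_simp

lemma fourier_insert_zero (S : Finset (Fin n)) :
    cubeFourier g (insert 0 (S.map (Fin.succEmb n))) = cubeFourier (gOdd g) S := by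
  unfold cubeFourier
  rw [sum_pi_succ (fun x => g x * cubeChar (insert 0 (S.map (Fin.succEmb n))) x)]
  have : ∀ y : Fin n → Bool,
      g (Fin.cons false y) * cubeChar (insert 0 (S.map (Fin.succEmb n))) (Fin.cons false y)
        + g (Fin.cons true y) * cubeChar (insert 0 (S.map (Fin.succEmb n))) (Fin.cons true y)
      = 2 * (gOdd g y * cubeChar S y) := by
    intro y
    rw [char_insert_zero, char_insert_zero, g_cons_false g, g_cons_true g]
    simp only [if_true, if_false, Bool.false_eq_true]
    ring
  rw [Finset.sum_congr rfl fun y _ => this y, ← Finset.mul_sum]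
  rw [show ((2:ℝ)^(n+1))⁻¹ * (2 * ∑ y : Fin n → Bool, gOdd g y * cubeChar S y)
    = ((2:ℝ)^(n+1))⁻¹ * 2 * ∑ y : Fin n → Bool, gOdd g y * cubeChar S y by ring]
  congr 1
  rw [pow_succ]
  field_simp

end step

lemma abs_rpow_rpow_div {p : ℝ} (hp : p ≠ 0) (x : ℝ) : (|x|^p)^(2/p) = x^2 := by
  rw [← Real.rpow_mul (abs_nonneg x), show p*(2/p) = 2 by field_simp,
    show (2:ℝ) = ((2:ℕ):ℝ) by norm_num, Real.rpow_natCast, sq_abs]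

lemma cube_HC (p : ℝ) (hp1 : 1 ≤ p) (hp2 : p ≤ 2) :
    ∀ (n : ℕ) (g : (Fin n → Bool) → ℝ),
      ∑ S : Finset (Fin n), (p-1)^(S.card) * (cubeFourier g S)^2
        ≤ ((2 ^ n : ℝ)⁻¹ * ∑ x : Fin n → Bool, |g x| ^ p)^(2/p) := by
  have hp0 : (0:ℝ) < p := by linarith
  have hp0' : p ≠ 0 := ne_of_gt hp0
  have hpm : 0 ≤ p - 1 := by linarith
  intro n
  induction n with
  | zero =>
    intro g
    set x₀ : Fin 0 → Bool := (fun i => i.elim0) with hx₀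
    have hsum : ∀ (F : (Fin 0 → Bool) → ℝ), ∑ x, F x = F x₀ := fun F =>
      Fintype.sum_subsingleton F x₀
    have hSsum : ∀ (F : Finset (Fin 0) → ℝ), ∑ S, F S = F ∅ := by
      intro F
      apply Fintype.sum_eq_single ∅
      intro S hS
      exact absurd (Finset.eq_empty_of_isEmpty S) hS
    rw [hSsum (fun S => (p-1)^(S.card) * (cubeFourier g S)^2), hsum (fun x => |g x|^p)]
    have hfour : cubeFourier g ∅ = g x₀ := by
      unfold cubeFourier
      rw [hsum (fun x => g x * cubeChar ∅ x)]
      simp [cubeChar]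
    rw [hfour]
    simp only [Finset.card_empty, pow_zero, one_mul, pow_zero, inv_one]
    rw [abs_rpow_rpow_div hp0' (g x₀)]
  | succ n IH =>
    intro g
    have key1 : ∑ T : Finset (Fin (n+1)), (p-1)^(T.card) * (cubeFourier g T)^2
        = ∑ S : Finset (Fin n), (p-1)^(S.card) * (cubeFourier (gEven g) S)^2
          + (p-1) * ∑ S : Finset (Fin n), (p-1)^(S.card) * (cubeFourier (gOdd g) S)^2 := by
      rw [sum_finset_succ (fun T => (p-1)^(T.card) * (cubeFourier g T)^2)]
      congr 1
      · apply Finset.sum_congr rfl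
        intro S _
        rw [Finset.card_map, fourier_map_succ]
      · rw [Finset.mul_sum]
        apply Finset.sum_congr rfl
        intro S _
        rw [Finset.card_insert_of_notMem (zero_not_mem_map S), Finset.card_map,
          fourier_insert_zero, pow_succ]
        ring
    set A := (2^n : ℝ)⁻¹ * ∑ y : Fin n → Bool, |gEven g y|^p with hA
    set B := (2^n : ℝ)⁻¹ * ∑ y : Fin n → Bool, |gOdd g y|^p with hB
    have hIH0 := IH (gEven g)
    have hIH1 := IH (gOdd g)
    have key2 : ∑ T : Finset (Fin (n+1)), (p-1)^(T.card) * (cubeFourier g T)^2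
        ≤ A^(2/p) + (p-1) * B^(2/p) := by
      rw [key1]
      exact add_le_add hIH0 (mul_le_mul_of_nonneg_left hIH1 hpm)
    -- rewrite the RHS
    set u : (Fin n → Bool) → ℝ :=
      fun y => (|gEven g y + gOdd g y|^p + |gEven g y - gOdd g y|^p)/2 with hu
    have hu0 : ∀ y, 0 ≤ u y := by
      intro y
      have := Real.rpow_nonneg (abs_nonneg (gEven g y + gOdd g y)) p
      have := Real.rpow_nonneg (abs_nonneg (gEven g y - gOdd g y)) p
      rw [hu]
      positivity
    have key3 : ((2:ℝ)^(n+1))⁻¹ * ∑ x : Fin (n+1) → Bool, |g x|^p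
        = (2^n : ℝ)⁻¹ * ∑ y : Fin n → Bool, u y := by
      rw [sum_pi_succ (fun x => |g x|^p)]
      have : ∀ y : Fin n → Bool, |g (Fin.cons false y)|^p + |g (Fin.cons true y)|^p
          = 2 * u y := by
        intro y
        rw [g_cons_false g y, g_cons_true g y, hu]
        ring
      rw [Finset.sum_congr rfl fun y _ => this y, ← Finset.mul_sum, pow_succ]
      field_simp
    rw [key3]
    -- core analytic step
    refine le_trans key2 ?_
    set c := (2^n : ℝ)⁻¹ with hc
    have hc0 : 0 ≤ c := by positivity
    set a : (Fin n → Bool) → ℝ := fun y => |gEven g y|^p with ha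
    set b : (Fin n → Bool) → ℝ := fun y => (p-1)^(p/2) * |gOdd g y|^p with hb
    have ha0 : ∀ y, 0 ≤ a y := fun y => Real.rpow_nonneg (abs_nonneg _) p
    have hb0 : ∀ y, 0 ≤ b y := fun y =>
      mul_nonneg (Real.rpow_nonneg hpm _) (Real.rpow_nonneg (abs_nonneg _) p)
    set r := 2/p with hr
    have hr1 : 1 ≤ r := by
      rw [hr, le_div_iff₀ hp0]
      linarith
    have hr0 : 0 < r := lt_of_lt_of_le zero_lt_one hr1
    have hinv : 1/r = p/2 := by
      rw [hr]
      field_simp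
    have pointwise : ∀ y, (a y^r + b y^r)^(1/r) ≤ u y := by
      intro y
      have e1 : a y^r = (gEven g y)^2 := abs_rpow_rpow_div hp0' _
      have e2 : b y^r = (p-1) * (gOdd g y)^2 := by
        rw [hb]
        rw [Real.mul_rpow (Real.rpow_nonneg hpm _) (Real.rpow_nonneg (abs_nonneg _) _)]
        rw [← Real.rpow_mul hpm, show (p/2)*r = 1 by rw [hr]; field_simp, Real.rpow_one,
          abs_rpow_rpow_div hp0']
      rw [e1, e2, hinv]
      exact two_point hp1 hp2
    have tri := ellr_triangle Finset.univ a b ha0 hb0 hr1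
    have step : ((∑ y, a y)^r + (∑ y, b y)^r)^(1/r) ≤ ∑ y, u y :=
      le_trans tri (Finset.sum_le_sum fun y _ => pointwise y)
    have sum_a_nonneg : 0 ≤ ∑ y, a y := Finset.sum_nonneg fun y _ => ha0 y
    have sum_b_nonneg : 0 ≤ ∑ y, b y := Finset.sum_nonneg fun y _ => hb0 y
    have inner_nonneg : 0 ≤ (∑ y, a y)^r + (∑ y, b y)^r :=
      add_nonneg (Real.rpow_nonneg sum_a_nonneg r) (Real.rpow_nonneg sum_b_nonneg r)
    have step2 : c * ((∑ y, a y)^r + (∑ y, b y)^r)^(1/r) ≤ c * ∑ y, u y :=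
      mul_le_mul_of_nonneg_left step hc0
    have step3 : (c * ((∑ y, a y)^r + (∑ y, b y)^r)^(1/r))^r ≤ (c * ∑ y, u y)^r :=
      Real.rpow_le_rpow (mul_nonneg hc0 (Real.rpow_nonneg inner_nonneg _)) step2 (le_of_lt hr0)
    have lhs_eq : (c * ((∑ y, a y)^r + (∑ y, b y)^r)^(1/r))^r
        = (c * ∑ y, a y)^r + (c * ∑ y, b y)^r := by
      rw [Real.mul_rpow hc0 (Real.rpow_nonneg inner_nonneg _),
        ← Real.rpow_mul inner_nonneg, one_div_mul_cancel (ne_of_gt hr0), Real.rpow_one,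
        mul_add, Real.mul_rpow hc0 sum_a_nonneg, Real.mul_rpow hc0 sum_b_nonneg]
    rw [lhs_eq] at step3
    have eA : (c * ∑ y, a y)^r = A^(2/p) := by rw [hA, hr]
    have eB : (c * ∑ y, b y)^r = (p-1) * B^(2/p) := by
      have : ∑ y, b y = (p-1)^(p/2) * ∑ y, |gOdd g y|^p := by
        rw [hb, Finset.mul_sum]
      rw [this, hB, hr]
      rw [show c * ((p-1)^(p/2) * ∑ y, |gOdd g y|^p) = (p-1)^(p/2) * (c * ∑ y, |gOdd g y|^p) by ring]
      rw [Real.mul_rpow (Real.rpow_nonneg hpm _)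
        (mul_nonneg hc0 (Finset.sum_nonneg fun y _ => Real.rpow_nonneg (abs_nonneg _) _))]
      congr 1
      rw [← Real.rpow_mul hpm, show (p/2)*(2/p) = 1 by field_simp, Real.rpow_one]
    rw [eA, eB] at step3
    exact step3


/-- Hypercontractive norm inequality for low-degree polynomials on the boolean cube:
if `f` has degree at most `d` (all Fourier coefficients on sets of size `> d` vanish),
then for all `q ≥ 2`, `‖f‖_q ≤ (q-1)^{d/2} ‖f‖_2`. -/
theorem cubeNorm_le_of_degree_le {n d : ℕ} (f : (Fin n → Bool) → ℝ)
    (hdeg : ∀ S : Finset (Fin n), d < S.card → cubeFourier f S = 0)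
    (q : ℝ) (hq : 2 ≤ q) :
    cubeNorm q f ≤ (q - 1) ^ ((d : ℝ) / 2) * cubeNorm 2 f := by
  have hq0 : (0:ℝ) < q := by linarith
  have hq1 : (1:ℝ) ≤ q - 1 := by linarith
  have hq1' : (0:ℝ) < q - 1 := by linarith
  set p := q/(q-1) with hpdef
  have hp1 : 1 ≤ p := by
    rw [hpdef, le_div_iff₀ hq1']
    linarith
  have hp2 : p ≤ 2 := by
    rw [hpdef, div_le_iff₀ hq1']
    linarith
  have hp0 : (0:ℝ) < p := by linarith
  have hpm1 : p - 1 = (q-1)⁻¹ := by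
    rw [hpdef]
    field_simp; ring
  set g : (Fin n → Bool) → ℝ := fun x => |f x|^(q-2) * f x with hgdef
  have hfg : ∀ x, f x * g x = |f x|^q := by
    intro x
    rcases eq_or_ne (f x) 0 with h | h
    · rw [hgdef]
      simp only [h, abs_zero, mul_zero, zero_mul]
      rw [Real.zero_rpow (ne_of_gt hq0)]
    · have habs : 0 < |f x| := abs_pos.2 h
      rw [hgdef]
      show f x * (|f x|^(q-2) * f x) = |f x|^q
      rw [show f x * (|f x|^(q-2) * f x) = |f x|^(q-2) * (f x)^2 by ring, ← sq_abs,
        show |f x|^2 = |f x|^((2:ℕ):ℝ) from (Real.rpow_natCast _ 2).symm,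
        ← Real.rpow_add habs]
      try norm_num
  have hgabs : ∀ x, |g x| = |f x|^(q-1) := by
    intro x
    rcases eq_or_ne (f x) 0 with h | h
    · rw [hgdef]
      simp only [h, abs_zero, mul_zero, abs_zero]
      rw [Real.zero_rpow (by intro hc; exact absurd (by linarith : q = 1) (by linarith))]
    · have habs : 0 < |f x| := abs_pos.2 h
      rw [hgdef]
      show |(|f x|^(q-2) * f x)| = |f x|^(q-1)
      rw [abs_mul, abs_of_nonneg (Real.rpow_nonneg (abs_nonneg _) _)]
      calc |f x|^(q-2) * |f x| = |f x|^(q-2) * |f x|^(1:ℝ) := by rw [Real.rpow_one]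
      _ = |f x|^(q-2+1) := (Real.rpow_add habs _ _).symm
      _ = |f x|^(q-1) := by rw [show q - 2 + 1 = q - 1 by ring]
  have hgp : ∀ x, |g x|^p = |f x|^q := by
    intro x
    rw [hgabs x, ← Real.rpow_mul (abs_nonneg _),
      show (q-1)*p = q by rw [hpdef]; field_simp]
  set M := (2 ^ n : ℝ)⁻¹ * ∑ x : Fin n → Bool, |f x| ^ q with hM
  have hM0 : 0 ≤ M := by
    rw [hM]
    have : ∀ x : Fin n → Bool, (0:ℝ) ≤ |f x|^q := fun x => Real.rpow_nonneg (abs_nonneg _) _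
    positivity
  have hMfg : M = ∑ S : Finset (Fin n), cubeFourier f S * cubeFourier g S := by
    rw [cube_plancherel, hM]
    congr 1
    exact Finset.sum_congr rfl fun x _ => (hfg x).symm
  -- Cauchy-Schwarz with weights
  set w : Finset (Fin n) → ℝ := fun S => (q-1)^(S.card) with hw
  have hw0 : ∀ S, 0 < w S := fun S => pow_pos hq1' _
  set F : Finset (Fin n) → ℝ := fun S => Real.sqrt (w S) * cubeFourier f S with hF
  set G : Finset (Fin n) → ℝ := fun S => (Real.sqrt (w S))⁻¹ * cubeFourier g S with hG
  have hFG : ∀ S, F S * G S = cubeFourier f S * cubeFourier g S := by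
    intro S
    rw [hF, hG]
    have : Real.sqrt (w S) ≠ 0 := ne_of_gt (Real.sqrt_pos.2 (hw0 S))
    field_simp
  have hCS : M^2 ≤ (∑ S : Finset (Fin n), w S * (cubeFourier f S)^2)
      * (∑ S : Finset (Fin n), (w S)⁻¹ * (cubeFourier g S)^2) := by
    have := Finset.sum_mul_sq_le_sq_mul_sq Finset.univ F G
    have hF2 : ∀ S, F S^2 = w S * (cubeFourier f S)^2 := by
      intro S
      rw [hF]
      rw [mul_pow, Real.sq_sqrt (le_of_lt (hw0 S))]
    have hG2 : ∀ S, G S^2 = (w S)⁻¹ * (cubeFourier g S)^2 := by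
      intro S
      rw [hG]
      rw [mul_pow, inv_pow, Real.sq_sqrt (le_of_lt (hw0 S))]
    calc M^2 = (∑ S : Finset (Fin n), F S * G S)^2 := by
          rw [Finset.sum_congr rfl fun S _ => hFG S, ← hMfg]
    _ ≤ (∑ S : Finset (Fin n), F S^2) * (∑ S : Finset (Fin n), G S^2) := this
    _ = _ := by
          rw [Finset.sum_congr rfl fun S _ => hF2 S, Finset.sum_congr rfl fun S _ => hG2 S]
  -- bound the two factors
  set V := (2 ^ n : ℝ)⁻¹ * ∑ x : Fin n → Bool, f x * f x with hV
  have hV0 : 0 ≤ V := by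
    rw [hV]
    exact mul_nonneg (by positivity) (Finset.sum_nonneg fun x _ => mul_self_nonneg _)
  have hfac1 : ∑ S : Finset (Fin n), w S * (cubeFourier f S)^2 ≤ (q-1)^d * V := by
    have hpar : ∑ S : Finset (Fin n), (cubeFourier f S)^2 = V := by
      rw [hV, ← cube_plancherel f f]
      exact Finset.sum_congr rfl fun S _ => sq (cubeFourier f S) ▸ rfl
    rw [← hpar, Finset.mul_sum]
    apply Finset.sum_le_sum
    intro S _
    rcases le_or_gt S.card d with h | h
    · apply mul_le_mul_of_nonneg_right _ (sq_nonneg _)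
      exact pow_le_pow_right₀ hq1 h
    · rw [hdeg S h]
      simp
  have hfac2 : ∑ S : Finset (Fin n), (w S)⁻¹ * (cubeFourier g S)^2 ≤ M^(2/p) := by
    have h1 : ∀ S : Finset (Fin n), (w S)⁻¹ = (p-1)^(S.card) := by
      intro S
      rw [hw, hpm1, inv_pow]
    have h2 := cube_HC p hp1 hp2 n g
    have h3 : (2 ^ n : ℝ)⁻¹ * ∑ x : Fin n → Bool, |g x| ^ p = M := by
      rw [hM]
      congr 1
      exact Finset.sum_congr rfl fun x _ => hgp x
    rw [Finset.sum_congr rfl fun S _ => by rw [h1 S]]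
    rw [h3] at h2
    exact h2
  have hmain : M^2 ≤ (q-1)^d * V * M^(2/p) := by
    calc M^2 ≤ (∑ S : Finset (Fin n), w S * (cubeFourier f S)^2)
        * (∑ S : Finset (Fin n), (w S)⁻¹ * (cubeFourier g S)^2) := hCS
    _ ≤ (q-1)^d * V * M^(2/p) := by
        apply mul_le_mul hfac1 hfac2 _ _
        · apply Finset.sum_nonneg
          intro S _
          exact mul_nonneg (inv_nonneg.2 (le_of_lt (hw0 S))) (sq_nonneg _)
        · exact mul_nonneg (pow_nonneg (by linarith) _) hV0
  -- conclude
  have hNq : cubeNorm q f = M^(1/q) := rfl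
  have habs2 : ∀ y : ℝ, |y|^(2:ℝ) = y * y := by
    intro y
    rw [show (2:ℝ) = ((2:ℕ):ℝ) by norm_num, Real.rpow_natCast, sq_abs, pow_two]
  have hX0 : 0 ≤ (2 ^ n : ℝ)⁻¹ * ∑ x : Fin n → Bool, |f x| ^ (2:ℝ) := by
    exact mul_nonneg (by positivity)
      (Finset.sum_nonneg fun x _ => Real.rpow_nonneg (abs_nonneg _) _)
  have hN2sq : (cubeNorm 2 f)^2 = V := by
    unfold cubeNorm
    rw [← Real.rpow_natCast (((2 ^ n : ℝ)⁻¹ * ∑ x : Fin n → Bool, |f x| ^ (2:ℝ)) ^ (1/(2:ℝ))) 2,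
      ← Real.rpow_mul hX0, show (1/(2:ℝ))*((2:ℕ):ℝ) = 1 by norm_num, Real.rpow_one, hV]
    congr 1
    exact Finset.sum_congr rfl fun x _ => habs2 (f x)
  have hN2nn : 0 ≤ cubeNorm 2 f := Real.rpow_nonneg hX0 _
  have hK : ((q-1)^d * V)^((1:ℝ)/2) = (q-1)^((d:ℝ)/2) * cubeNorm 2 f := by
    rw [Real.mul_rpow (pow_nonneg (by linarith) _) hV0]
    congr 1
    · rw [← Real.rpow_natCast (q-1) d, ← Real.rpow_mul (by linarith : (0:ℝ) ≤ q-1)]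
      congr 1
      ring
    · rw [← hN2sq, ← Real.rpow_natCast (cubeNorm 2 f) 2, ← Real.rpow_mul hN2nn]
      norm_num
  rcases eq_or_lt_of_le hM0 with hMz | hMpos
  · rw [hNq, ← hMz, Real.zero_rpow (by positivity : 1/q ≠ 0)]
    exact mul_nonneg (Real.rpow_nonneg (by linarith) _) hN2nn
  · have hstep : M^(2/q) ≤ (q-1)^d * V := by
      have hMp : 0 < M^(2/p) := Real.rpow_pos_of_pos hMpos _
      apply le_of_mul_le_mul_right _ hMp
      calc M^(2/q) * M^(2/p) = M^(2/q + 2/p) := (Real.rpow_add hMpos _ _).symm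
      _ = M^(2:ℝ) := by
          congr 1
          rw [hpdef]
          field_simp
          ring
      _ = M^2 := by
          rw [show (2:ℝ) = ((2:ℕ):ℝ) by norm_num, Real.rpow_natCast]
      _ ≤ (q-1)^d * V * M^(2/p) := hmain
    have : (M^(2/q))^((1:ℝ)/2) ≤ ((q-1)^d * V)^((1:ℝ)/2) :=
      Real.rpow_le_rpow (Real.rpow_nonneg hM0 _) hstep (by norm_num)
    rw [← Real.rpow_mul hM0, hK] at this
    rw [hNq]
    calc M^(1/q) = M^(2/q * (1/2)) := by congr 1; ring
    _ ≤ (q-1)^((d:ℝ)/2) * cubeNorm 2 f := this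
end
end

section
/- Let Δ be a Hermitian operator on ℂ^n. Then ∫ (tr(Δ |ψ⟩⟨ψ|))² dψ = ((tr Δ)² + tr(Δ²)) / (n(n+1)), where the integral is over the uniform (unitarily invariant) probability measure on the unit vectors ψ of ℂ^n. -/
noncomputable section

open MeasureTheory Matrix

instance {n : ℕ} : MeasurableSpace (EuclideanSpace ℂ (Fin n)) :=
  MeasurableSpace.comap WithLp.ofLp MeasurableSpace.pi
instance {n : ℕ} : BorelSpace (EuclideanSpace ℂ (Fin n)) := PiLp.borelSpace 2

/-- The rank-one projector `|ψ⟩⟨ψ|`, with entries `ψ_a ψ̄_b`. -/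
def rankOneProj {n : ℕ} (ψ : EuclideanSpace ℂ (Fin n)) : Matrix (Fin n) (Fin n) ℂ :=
  Matrix.of fun a b => ψ a * (starRingEnd ℂ) (ψ b)

abbrev Sph (n : ℕ) := Metric.sphere (0 : EuclideanSpace ℂ (Fin n)) 1

def sphMap {n : ℕ} (U : EuclideanSpace ℂ (Fin n) ≃ₗᵢ[ℂ] EuclideanSpace ℂ (Fin n)) (ψ : Sph n) : Sph n :=
  ⟨U ψ.1, by rw [mem_sphere_zero_iff_norm, U.norm_map, ← mem_sphere_zero_iff_norm]; exact ψ.2⟩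

lemma sphMap_cont {n : ℕ} (U : EuclideanSpace ℂ (Fin n) ≃ₗᵢ[ℂ] EuclideanSpace ℂ (Fin n)) :
    Continuous (sphMap U) :=
  Continuous.subtype_mk (U.continuous.comp continuous_subtype_val) _

example {n : ℕ} : CompactSpace (Sph n) := by infer_instance

lemma coord_cont {n : ℕ} (a : Fin n) : Continuous (fun ψ : Sph n => (ψ.1 : Fin n → ℂ) a) := by
  exact (continuous_apply a).comp ((PiLp.continuous_ofLp 2 _).comp continuous_subtype_val)

lemma integral_comp_sphMap {n : ℕ} (μ : Measure (Sph n)) [IsProbabilityMeasure μ]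
    (hinv : ∀ U : EuclideanSpace ℂ (Fin n) ≃ₗᵢ[ℂ] EuclideanSpace ℂ (Fin n),
      Measure.map (fun ψ : Sph n =>
        (⟨U ψ.1, by
          rw [mem_sphere_zero_iff_norm, U.norm_map, ← mem_sphere_zero_iff_norm]
          exact ψ.2⟩ : Sph n)) μ = μ)
    (U : EuclideanSpace ℂ (Fin n) ≃ₗᵢ[ℂ] EuclideanSpace ℂ (Fin n))
    (f : Sph n → ℂ) (hf : Continuous f) :
    ∫ ψ, f ψ ∂μ = ∫ ψ, f (sphMap U ψ) ∂μ := by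
  have h : Measure.map (sphMap U) μ = μ := hinv U
  conv_lhs => rw [← h]
  rw [integral_map (sphMap_cont U).aemeasurable hf.aestronglyMeasurable]


/-- multiplication by a unit-norm complex number, as a linear isometry equiv of ℂ. -/
def phase1 (z : ℂ) (hz : ‖z‖ = 1) : ℂ ≃ₗᵢ[ℂ] ℂ where
  toLinearEquiv := LinearEquiv.smulOfNeZero ℂ ℂ z (by intro h; rw [h] at hz; simp at hz)
  norm_map' := by intro x; simp [LinearEquiv.smulOfNeZero, LinearEquiv.smulOfUnit,
    DistribMulAction.toLinearEquiv, smul_eq_mul, hz]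

example (z : ℂ) (hz : ‖z‖ = 1) (x : ℂ) : phase1 z hz x = z * x := rfl

/-- diagonal phase unitary -/
def diagPhase {n : ℕ} (z : Fin n → ℂ) (hz : ∀ j, ‖z j‖ = 1) :
    EuclideanSpace ℂ (Fin n) ≃ₗᵢ[ℂ] EuclideanSpace ℂ (Fin n) :=
  LinearIsometryEquiv.piLpCongrRight 2 (fun j => phase1 (z j) (hz j))

lemma diagPhase_apply {n : ℕ} (z : Fin n → ℂ) (hz : ∀ j, ‖z j‖ = 1)
    (ψ : EuclideanSpace ℂ (Fin n)) (j : Fin n) :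
    diagPhase z hz ψ j = z j * ψ j := rfl

/-- permutation unitary -/
def permU {n : ℕ} (σ : Equiv.Perm (Fin n)) :
    EuclideanSpace ℂ (Fin n) ≃ₗᵢ[ℂ] EuclideanSpace ℂ (Fin n) :=
  LinearIsometryEquiv.piLpCongrLeft 2 ℂ ℂ σ

lemma permU_apply {n : ℕ} (σ : Equiv.Perm (Fin n)) (ψ : EuclideanSpace ℂ (Fin n)) (j : Fin n) :
    permU σ ψ j = ψ (σ.symm j) := rfl


def s2 : ℂ := (Real.sqrt 2 : ℝ)

lemma s2_sq : s2 * s2 = 2 := by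
  simp only [s2, ← Complex.ofReal_mul, Real.mul_self_sqrt (by norm_num : (0:ℝ) ≤ 2)]
  norm_num

lemma s2_ne : s2 ≠ 0 := by
  intro h
  have h2 := s2_sq
  rw [h] at h2; simp at h2

/-- the rotation linear map on coordinates a, c -/
def rotFun {n : ℕ} (a c : Fin n) : EuclideanSpace ℂ (Fin n) →ₗ[ℂ] EuclideanSpace ℂ (Fin n) where
  toFun ψ := WithLp.toLp 2 fun j => if j = a then (ψ a + ψ c) / s2 else if j = c then (ψ a - ψ c) / s2 else ψ j
  map_add' ψ φ := by
    ext j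
    simp only [PiLp.add_apply]
    split_ifs <;> ring
  map_smul' r ψ := by
    ext j
    simp only [PiLp.smul_apply, smul_eq_mul, RingHom.id_apply]
    split_ifs <;> ring

lemma rotFun_apply {n : ℕ} (a c : Fin n) (ψ : EuclideanSpace ℂ (Fin n)) (j : Fin n) :
    rotFun a c ψ j = if j = a then (ψ a + ψ c) / s2 else if j = c then (ψ a - ψ c) / s2 else ψ j := rfl

lemma rotFun_invol {n : ℕ} (a c : Fin n) (hac : a ≠ c) :
    Function.Involutive (rotFun a c) := by
  intro ψ
  ext j
  rw [rotFun_apply]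
  by_cases h1 : j = a
  · rw [h1, if_pos rfl, rotFun_apply, rotFun_apply, if_pos rfl, if_neg (Ne.symm hac), if_pos rfl,
      ← add_div, div_div, s2_sq,
      show ψ a + ψ c + (ψ a - ψ c) = 2 * ψ a by ring, mul_div_cancel_left₀ _ two_ne_zero]
  · rw [if_neg h1]
    by_cases h2 : j = c
    · rw [h2, if_pos rfl, rotFun_apply, rotFun_apply, if_pos rfl, if_neg (Ne.symm hac), if_pos rfl,
        div_sub_div_same, div_div, s2_sq,
        show ψ a + ψ c - (ψ a - ψ c) = 2 * ψ c by ring, mul_div_cancel_left₀ _ two_ne_zero]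
    · rw [if_neg h2, rotFun_apply, if_neg h1, if_neg h2]

lemma s2_norm : ‖s2‖ = Real.sqrt 2 := by
  simp [s2, Complex.norm_real, abs_of_nonneg (Real.sqrt_nonneg 2)]

lemma rot_key (x y : ℂ) : ‖(x+y)/s2‖^2 + ‖(x-y)/s2‖^2 = ‖x‖^2 + ‖y‖^2 := by
  rw [norm_div, norm_div, s2_norm, div_pow, div_pow, Real.sq_sqrt (by norm_num : (0:ℝ) ≤ 2),
    ← add_div]
  have := parallelogram_law_with_norm ℝ x y
  simp only [pow_two] at this ⊢
  rw [this]
  ring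

lemma rotFun_norm {n : ℕ} (a c : Fin n) (hac : a ≠ c) (ψ : EuclideanSpace ℂ (Fin n)) :
    ‖rotFun a c ψ‖ = ‖ψ‖ := by
  rw [EuclideanSpace.norm_eq, EuclideanSpace.norm_eq]
  congr 1
  have hc : c ∈ Finset.univ.erase a := Finset.mem_erase.2 ⟨Ne.symm hac, Finset.mem_univ c⟩
  rw [← Finset.add_sum_erase _ _ (Finset.mem_univ a), ← Finset.add_sum_erase _ _ hc,
    ← Finset.add_sum_erase _ (fun j => ‖ψ j‖^2) (Finset.mem_univ a),
    ← Finset.add_sum_erase _ (fun j => ‖ψ j‖^2) hc, ← add_assoc, ← add_assoc]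
  congr 1
  · rw [rotFun_apply, rotFun_apply, if_pos rfl, if_neg (Ne.symm hac), if_pos rfl]
    exact rot_key (ψ a) (ψ c)
  · apply Finset.sum_congr rfl
    intro j hj
    have hja : j ≠ a := Finset.ne_of_mem_erase (Finset.mem_of_mem_erase hj)
    have hjc : j ≠ c := Finset.ne_of_mem_erase hj
    rw [rotFun_apply, if_neg hja, if_neg hjc]

def rotU {n : ℕ} (a c : Fin n) (hac : a ≠ c) :
    EuclideanSpace ℂ (Fin n) ≃ₗᵢ[ℂ] EuclideanSpace ℂ (Fin n) where
  toLinearEquiv := LinearEquiv.ofInvolutive (rotFun a c) (rotFun_invol a c hac)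
  norm_map' := rotFun_norm a c hac

lemma rotU_apply {n : ℕ} (a c : Fin n) (hac : a ≠ c) (ψ : EuclideanSpace ℂ (Fin n)) (j : Fin n) :
    rotU a c hac ψ j = if j = a then (ψ a + ψ c) / s2 else if j = c then (ψ a - ψ c) / s2 else ψ j := rfl

variable {n : ℕ}

/-- the fourth moment integrand -/
def momF (a b c d : Fin n) (ψ : Sph n) : ℂ :=
  ψ.1 a * (starRingEnd ℂ) (ψ.1 b) * (ψ.1 c * (starRingEnd ℂ) (ψ.1 d))

lemma momF_cont (a b c d : Fin n) : Continuous (momF a b c d) := by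
  exact ((coord_cont a).mul (continuous_star.comp (coord_cont b))).mul
    ((coord_cont c).mul (continuous_star.comp (coord_cont d)))

lemma momF_integrable (μ : Measure (Sph n)) [IsProbabilityMeasure μ] (a b c d : Fin n) :
    Integrable (momF a b c d) μ :=
  (momF_cont a b c d).integrable_of_hasCompactSupport
    (HasCompactSupport.of_compactSpace _)

def Mom (μ : Measure (Sph n)) (a b c d : Fin n) : ℂ := ∫ ψ, momF a b c d ψ ∂μ

open ComplexConjugate

def Hinv (μ : Measure (Sph n)) : Prop :=
  ∀ U : EuclideanSpace ℂ (Fin n) ≃ₗᵢ[ℂ] EuclideanSpace ℂ (Fin n),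
    Measure.map (fun ψ : Sph n =>
      (⟨U ψ.1, by
        rw [mem_sphere_zero_iff_norm, U.norm_map, ← mem_sphere_zero_iff_norm]
        exact ψ.2⟩ : Sph n)) μ = μ

lemma integral_comp_sphMap' (μ : Measure (Sph n)) [IsProbabilityMeasure μ] (hinv : Hinv μ)
    (U : EuclideanSpace ℂ (Fin n) ≃ₗᵢ[ℂ] EuclideanSpace ℂ (Fin n))
    (f : Sph n → ℂ) (hf : Continuous f) :
    ∫ ψ, f ψ ∂μ = ∫ ψ, f (sphMap U ψ) ∂μ :=
  integral_comp_sphMap μ hinv U f hf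

@[simp] lemma sphMap_coe (U : EuclideanSpace ℂ (Fin n) ≃ₗᵢ[ℂ] EuclideanSpace ℂ (Fin n))
    (ψ : Sph n) : (sphMap U ψ).1 = U ψ.1 := rfl

variable (μ : Measure (Sph n)) [IsProbabilityMeasure μ]

lemma mom_phase (hinv : Hinv μ) (z : Fin n → ℂ) (hz : ∀ j, ‖z j‖ = 1) (a b c d : Fin n) :
    Mom μ a b c d = (z a * conj (z b) * (z c * conj (z d))) * Mom μ a b c d := by
  have h1 : (∫ ψ, momF a b c d ψ ∂μ)
      = ∫ ψ, (z a * conj (z b) * (z c * conj (z d))) * momF a b c d ψ ∂μ := by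
    rw [integral_comp_sphMap' μ hinv (diagPhase z hz) _ (momF_cont a b c d)]
    congr 1
    funext ψ
    show (z a * ψ.1 a) * conj (z b * ψ.1 b) * ((z c * ψ.1 c) * conj (z d * ψ.1 d)) = _
    rw [_root_.map_mul, _root_.map_mul]
    unfold momF
    ring
  rw [Mom]
  conv_lhs => rw [h1]
  rw [integral_const_mul]

lemma mom_perm (hinv : Hinv μ) (σ : Equiv.Perm (Fin n)) (a b c d : Fin n) :
    Mom μ (σ a) (σ b) (σ c) (σ d) = Mom μ a b c d := by
  rw [Mom, integral_comp_sphMap' μ hinv (permU σ) _ (momF_cont _ _ _ _), Mom]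
  congr 1
  funext ψ
  simp only [momF, sphMap_coe, permU_apply]
  rw [Equiv.symm_apply_apply, Equiv.symm_apply_apply, Equiv.symm_apply_apply,
    Equiv.symm_apply_apply]

lemma mom_pair_swap (a b c d : Fin n) : Mom μ a b c d = Mom μ c d a b := by
  rw [Mom, Mom, show momF a b c d = momF (n := n) c d a b from funext fun ψ => by
    unfold momF; ring]

lemma mom_cross (a b c d : Fin n) : Mom μ a b c d = Mom μ a d c b := by
  rw [Mom, Mom, show momF a b c d = momF (n := n) a d c b from funext fun ψ => by
    unfold momF; ring]

lemma mom_zero_of_k (hinv : Hinv μ) (a b c d k : Fin n)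
    (hC : ((if a = k then Complex.I else 1) * conj (if b = k then Complex.I else 1) *
      ((if c = k then Complex.I else 1) * conj (if d = k then Complex.I else 1))) ≠ 1) :
    Mom μ a b c d = 0 := by
  have hp : Mom μ a b c d
      = ((if a = k then Complex.I else 1) * conj (if b = k then Complex.I else 1) *
        ((if c = k then Complex.I else 1) * conj (if d = k then Complex.I else 1)))
        * Mom μ a b c d :=
    mom_phase μ hinv (fun j => if j = k then Complex.I else 1)
      (fun j => by split_ifs <;> simp) a b c d
  set C := ((if a = k then Complex.I else 1) * conj (if b = k then Complex.I else 1) *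
      ((if c = k then Complex.I else 1) * conj (if d = k then Complex.I else 1))) with hCdef
  have h2 : (1 - C) * Mom μ a b c d = 0 := by linear_combination hp
  rcases mul_eq_zero.1 h2 with h3 | h3
  · exact absurd (by linear_combination -h3) hC
  · exact h3

lemma mom_zero (hinv : Hinv μ) {a b c d : Fin n}
    (h : ¬((a = b ∧ c = d) ∨ (a = d ∧ c = b))) : Mom μ a b c d = 0 := by
  push_neg at h
  by_cases hab : a = b
  · have hcd : c ≠ d := h.1 hab
    by_cases had : a = d
    · have hca : c ≠ a := fun e => hcd (e.trans had)
      apply mom_zero_of_k μ hinv a b c d c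
      rw [if_neg (Ne.symm hca), if_neg (fun e : b = c => hca (e.symm.trans hab.symm)),
        if_pos rfl, if_neg (fun e : d = c => hcd e.symm)]
      norm_num [Complex.ext_iff]
    · apply mom_zero_of_k μ hinv a b c d d
      rw [if_neg had, if_neg (fun e : b = d => had (hab.trans e)), if_neg hcd, if_pos rfl]
      norm_num [Complex.ext_iff]
  · by_cases had : a = d
    · have hcb : c ≠ b := h.2 had
      apply mom_zero_of_k μ hinv a b c d b
      rw [if_neg hab, if_pos rfl, if_neg hcb, if_neg (fun e : d = b => hab (had.trans e))]
      norm_num [Complex.ext_iff]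
    · apply mom_zero_of_k μ hinv a b c d a
      rw [if_pos rfl, if_neg (fun e : b = a => hab e.symm), if_neg (fun e : d = a => had e.symm)]
      by_cases hca : c = a
      · rw [if_pos hca]
        norm_num [Complex.ext_iff]
      · rw [if_neg hca]
        norm_num [Complex.ext_iff]

lemma sphere_sum (ψ : Sph n) : ∑ j, ψ.1 j * conj (ψ.1 j) = 1 := by
  have h1 : ‖ψ.1‖ = 1 := mem_sphere_zero_iff_norm.1 ψ.2
  have h2 : ∑ j, ‖ψ.1 j‖ ^ 2 = 1 := by
    rw [EuclideanSpace.norm_eq] at h1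
    have := Real.sqrt_eq_one.1 h1
    exact this
  have h3 : ∀ j, ψ.1 j * conj (ψ.1 j) = ((‖ψ.1 j‖ ^ 2 : ℝ) : ℂ) := by
    intro j
    rw [Complex.mul_conj]
    norm_cast
    rw [← Complex.sq_norm]
  simp_rw [h3]
  rw [← Complex.ofReal_sum, h2, Complex.ofReal_one]

lemma mom_sum : ∑ a, ∑ c, Mom μ a a c c = 1 := by
  unfold Mom
  have hst : ∀ a : Fin n, ∑ c, ∫ ψ, momF a a c c ψ ∂μ = ∫ ψ, ∑ c, momF a a c c ψ ∂μ :=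
    fun a => (integral_finset_sum _ (fun c _ => momF_integrable μ a a c c)).symm
  simp_rw [hst]
  rw [← integral_finset_sum _
    (fun a _ => integrable_finset_sum _ (fun c _ => momF_integrable μ a a c c))]
  rw [show (fun ψ : Sph n => ∑ a, ∑ c, momF a a c c ψ) = fun _ => (1 : ℂ) from
    funext fun ψ => by
      unfold momF
      rw [show ∑ a, ∑ c, ψ.1 a * conj (ψ.1 a) * (ψ.1 c * conj (ψ.1 c))
          = (∑ a, ψ.1 a * conj (ψ.1 a)) * (∑ c, ψ.1 c * conj (ψ.1 c)) by
        rw [Finset.sum_mul]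
        exact Finset.sum_congr rfl fun a _ => by rw [Finset.mul_sum]]
      rw [sphere_sum ψ, one_mul]]
  simp

lemma exists_perm {a c i j : Fin n} (h1 : a ≠ c) (h2 : i ≠ j) :
    ∃ σ : Equiv.Perm (Fin n), σ a = i ∧ σ c = j := by
  classical
  set σ₁ := Equiv.swap a i with hσ₁
  have ha1 : σ₁ a = i := Equiv.swap_apply_left a i
  set c' := σ₁ c with hc'
  have hic' : i ≠ c' := by
    intro e
    exact h1 (σ₁.injective (ha1.trans (e.trans hc'.symm ▸ rfl)) )
  refine ⟨σ₁.trans (Equiv.swap c' j), ?_, ?_⟩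
  · simp only [Equiv.trans_apply, ha1]
    rw [Equiv.swap_apply_of_ne_of_ne hic' h2]
  · simp only [Equiv.trans_apply, ← hc']
    exact Equiv.swap_apply_left c' j

lemma mom_rot (hinv : Hinv μ) {a c : Fin n} (hac : a ≠ c) :
    Mom μ a a a a = 2 * Mom μ a a c c := by
  have key : ∀ u v : ℂ, u/s2 * (v/s2) = u*v/2 := fun u v => by
    rw [div_mul_div_comm, s2_sq]
  have hpt : (fun ψ : Sph n => momF a a a a (sphMap (rotU a c hac) ψ))
      = fun ψ => (4 : ℂ)⁻¹ * ∑ i ∈ ({a,c} : Finset (Fin n)), ∑ j ∈ ({a,c} : Finset (Fin n)),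
          ∑ k ∈ ({a,c} : Finset (Fin n)), ∑ l ∈ ({a,c} : Finset (Fin n)), momF i j k l ψ := by
    funext ψ
    have hconj : conj ((ψ.1 a + ψ.1 c)/s2) = (conj (ψ.1 a) + conj (ψ.1 c))/s2 := by
      rw [map_div₀, map_add]
      congr 1
      simp [s2, Complex.conj_ofReal]
    simp only [momF, sphMap_coe]
    rw [show (rotU a c hac) ψ.1 a = (ψ.1 a + ψ.1 c)/s2 from by rw [rotU_apply, if_pos rfl]]
    rw [hconj, key]
    simp only [Finset.sum_pair hac]
    ring
  have hMom : Mom μ a a a a = (4:ℂ)⁻¹ * ∑ i ∈ ({a,c} : Finset (Fin n)),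
      ∑ j ∈ ({a,c} : Finset (Fin n)), ∑ k ∈ ({a,c} : Finset (Fin n)),
      ∑ l ∈ ({a,c} : Finset (Fin n)), Mom μ i j k l := by
    rw [Mom, integral_comp_sphMap' μ hinv (rotU a c hac) _ (momF_cont _ _ _ _), hpt,
      integral_const_mul]
    congr 1
    rw [integral_finset_sum _ (fun i _ => integrable_finset_sum _ (fun j _ =>
      integrable_finset_sum _ (fun k _ => integrable_finset_sum _ (fun l _ =>
      momF_integrable μ i j k l))))]
    refine Finset.sum_congr rfl fun i _ => ?_
    rw [integral_finset_sum _ (fun j _ => integrable_finset_sum _ (fun k _ =>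
      integrable_finset_sum _ (fun l _ => momF_integrable μ i j k l)))]
    refine Finset.sum_congr rfl fun j _ => ?_
    rw [integral_finset_sum _ (fun k _ => integrable_finset_sum _ (fun l _ =>
      momF_integrable μ i j k l))]
    refine Finset.sum_congr rfl fun k _ => ?_
    rw [integral_finset_sum _ (fun l _ => momF_integrable μ i j k l)]
    rfl
  have hca : c ≠ a := Ne.symm hac
  simp only [Finset.sum_pair hac] at hMom
  rw [mom_zero μ hinv (by simp [hac, hca] : ¬((a = a ∧ a = c) ∨ (a = c ∧ a = a))),
    mom_zero μ hinv (by simp [hac, hca] : ¬((a = a ∧ c = a) ∨ (a = a ∧ c = a))),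
    mom_zero μ hinv (by simp [hac, hca] : ¬((a = c ∧ a = a) ∨ (a = a ∧ a = c))),
    mom_zero μ hinv (by simp [hac, hca] : ¬((a = c ∧ a = c) ∨ (a = c ∧ a = c))),
    mom_zero μ hinv (by simp [hac, hca] : ¬((a = c ∧ c = c) ∨ (a = c ∧ c = c))),
    mom_zero μ hinv (by simp [hac, hca] : ¬((c = a ∧ a = a) ∨ (c = a ∧ a = a))),
    mom_zero μ hinv (by simp [hac, hca] : ¬((c = a ∧ c = a) ∨ (c = a ∧ c = a))),
    mom_zero μ hinv (by simp [hac, hca] : ¬((c = a ∧ c = c) ∨ (c = c ∧ c = a))),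
    mom_zero μ hinv (by simp [hac, hca] : ¬((c = c ∧ a = c) ∨ (c = c ∧ a = c))),
    mom_zero μ hinv (by simp [hac, hca] : ¬((c = c ∧ c = a) ∨ (c = a ∧ c = c)))] at hMom
  rw [mom_cross μ a c c a, mom_cross μ c a a c, mom_pair_swap μ c c a a] at hMom
  have hswap : Mom μ c c c c = Mom μ a a a a := by
    have := mom_perm μ hinv (Equiv.swap a c) a a a a
    rwa [Equiv.swap_apply_left] at this
  rw [hswap] at hMom
  linear_combination 2 * hMom

lemma mom_values (hinv : Hinv μ) (hn : 1 ≤ n) :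
    (∀ a : Fin n, Mom μ a a a a = 2 / ((n:ℂ) * ((n:ℂ)+1))) ∧
    (∀ a c : Fin n, a ≠ c → Mom μ a a c c = 1 / ((n:ℂ) * ((n:ℂ)+1))) := by
  have hN : ((n:ℂ) * ((n:ℂ)+1)) ≠ 0 := by
    have h1 : (n:ℂ) ≠ 0 := Nat.cast_ne_zero.2 (by omega)
    have h2 : ((n:ℂ)+1) ≠ 0 := by
      intro e
      have : ((n+1 : ℕ) : ℂ) = 0 := by push_cast; linear_combination e
      exact (Nat.cast_ne_zero.2 (by omega)) this
    exact mul_ne_zero h1 h2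
  rcases eq_or_lt_of_le hn with h1 | h2
  · -- n = 1
    have hn1 : n = 1 := h1.symm
    subst hn1
    constructor
    · intro a
      have hs := mom_sum μ
      rw [Fin.sum_univ_one, Fin.sum_univ_one] at hs
      have ha : a = 0 := Subsingleton.elim a 0
      rw [ha, hs]
      norm_num
    · intro a c hac
      exact absurd (Subsingleton.elim a c) hac
  · -- n ≥ 2
    set i0 : Fin n := ⟨0, by omega⟩ with hi0
    set j0 : Fin n := ⟨1, by omega⟩ with hj0
    have hij : i0 ≠ j0 := by
      simp [hi0, hj0, Fin.ext_iff]
    set A := Mom μ i0 i0 i0 i0 with hA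
    set B := Mom μ i0 i0 j0 j0 with hB
    have huniA : ∀ a : Fin n, Mom μ a a a a = A := by
      intro a
      have := mom_perm μ hinv (Equiv.swap i0 a) i0 i0 i0 i0
      rwa [Equiv.swap_apply_left] at this
    have huniB : ∀ a c : Fin n, a ≠ c → Mom μ a a c c = B := by
      intro a c hac
      obtain ⟨σ, hσ1, hσ2⟩ := exists_perm hij hac
      have := mom_perm μ hinv σ i0 i0 j0 j0
      rwa [hσ1, hσ2] at this
    have hrel : A = 2 * B := mom_rot μ hinv hij
    have hsum : (n:ℂ) * ((n:ℂ) + 1) * B = 1 := by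
      have hs := mom_sum μ
      have hval : ∀ a c : Fin n, Mom μ a a c c = B + (if a = c then A - B else 0) := by
        intro a c
        by_cases hac : a = c
        · subst hac
          rw [if_pos rfl, huniA a]
          ring
        · rw [if_neg hac, huniB a c hac]
          ring
      simp_rw [hval] at hs
      simp only [Finset.sum_add_distrib, Finset.sum_const, Finset.card_univ, Fintype.card_fin,
        nsmul_eq_mul, Finset.sum_ite_eq, Finset.mem_univ, if_true] at hs
      rw [hrel] at hs
      push_cast at hs ⊢
      linear_combination hs
    have hBval : B = 1 / ((n:ℂ) * ((n:ℂ)+1)) := by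
      rw [eq_div_iff hN]
      linear_combination hsum
    constructor
    · intro a
      rw [huniA a, hrel, hBval]
      ring
    · intro a c hac
      rw [huniB a c hac, hBval]

lemma mom_master (hinv : Hinv μ) (hn : 1 ≤ n) (a b c d : Fin n) :
    Mom μ a b c d = ((if a = b then (1:ℂ) else 0) * (if c = d then (1:ℂ) else 0)
      + (if a = d then (1:ℂ) else 0) * (if c = b then (1:ℂ) else 0))
        / ((n:ℂ) * ((n:ℂ)+1)) := by
  obtain ⟨hA, hB⟩ := mom_values μ hinv hn
  by_cases hab : a = b
  · subst hab
    by_cases hcd : c = d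
    · subst hcd
      by_cases hac : a = c
      · subst hac
        rw [hA a]
        norm_num
      · have h2 : ¬ c = a := fun e => hac e.symm
        rw [hB a c hac]
        simp [hac, h2]
    · by_cases had : a = d
      · by_cases hca : c = a
        · exact absurd (hca.trans had) hcd
        · rw [mom_zero μ hinv (by tauto)]
          simp [hcd, hca]
      · rw [mom_zero μ hinv (by tauto)]
        simp [hcd, had]
  · by_cases had : a = d
    · subst had
      by_cases hcb : c = b
      · subst hcb
        rw [mom_cross μ a c c a, hB a c (fun e => hab e)]
        have h2 : ¬ c = a := fun e => hab e.symm
        simp [hab, h2]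
      · rw [mom_zero μ hinv (by tauto)]
        simp [hab, hcb]
    · rw [mom_zero μ hinv (by tauto)]
      simp [hab, had]

theorem integral_trace_sq_eq' {n : ℕ}
    (μ : Measure (Metric.sphere (0 : EuclideanSpace ℂ (Fin n)) 1))
    [IsProbabilityMeasure μ]
    (hinv : Hinv μ)
    (Δ : Matrix (Fin n) (Fin n) ℂ) :
    ∫ ψ : Metric.sphere (0 : EuclideanSpace ℂ (Fin n)) 1,
        ((Δ * rankOneProj (ψ : EuclideanSpace ℂ (Fin n))).trace) ^ 2 ∂μ
      = ((Δ.trace) ^ 2 + (Δ * Δ).trace) / ((n : ℂ) * ((n : ℂ) + 1)) := by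
  rcases Nat.eq_zero_or_pos n with hn | hn
  · exfalso
    haveI : IsEmpty (Sph n) := by
      subst hn
      constructor
      rintro ⟨ψ, hψ⟩
      rw [mem_sphere_zero_iff_norm] at hψ
      have hz : ψ = 0 := by ext i; exact i.elim0
      rw [hz, norm_zero] at hψ
      exact one_ne_zero hψ.symm
    have h1 : μ Set.univ = 1 := measure_univ
    rw [Set.univ_eq_empty_iff.2 this, measure_empty] at h1
    exact one_ne_zero h1.symm
  · have htr : ∀ ψ : Sph n, (Δ * rankOneProj ψ.1).trace
        = ∑ a, ∑ b, Δ a b * (ψ.1 b * conj (ψ.1 a)) := by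
      intro ψ
      simp [Matrix.trace, Matrix.diag, Matrix.mul_apply, rankOneProj]
    have key : ∀ ψ : Sph n, ((Δ * rankOneProj ψ.1).trace)^2
        = ∑ a, ∑ c, ∑ b, ∑ d, Δ a b * Δ c d * momF b a d c ψ := by
      intro ψ
      rw [htr ψ, sq, Finset.sum_mul_sum]
      refine Finset.sum_congr rfl fun a _ => Finset.sum_congr rfl fun c _ => ?_
      rw [Finset.sum_mul_sum]
      refine Finset.sum_congr rfl fun b _ => Finset.sum_congr rfl fun d _ => ?_
      unfold momF
      ring
    rw [show (fun ψ : Sph n => ((Δ * rankOneProj ψ.1).trace)^2)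
        = fun ψ => ∑ a, ∑ c, ∑ b, ∑ d, Δ a b * Δ c d * momF b a d c ψ from funext key]
    rw [integral_finset_sum _ (fun a _ => integrable_finset_sum _ (fun c _ =>
      integrable_finset_sum _ (fun b _ => integrable_finset_sum _ (fun d _ =>
      (momF_integrable μ b a d c).const_mul _))))]
    have step : ∀ a, (∫ ψ, ∑ c, ∑ b, ∑ d, Δ a b * Δ c d * momF b a d c ψ ∂μ)
        = ∑ c, ∑ b, ∑ d, Δ a b * Δ c d * Mom μ b a d c := by
      intro a
      rw [integral_finset_sum _ (fun c _ => integrable_finset_sum _ (fun b _ =>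
        integrable_finset_sum _ (fun d _ => (momF_integrable μ b a d c).const_mul _)))]
      refine Finset.sum_congr rfl fun c _ => ?_
      rw [integral_finset_sum _ (fun b _ => integrable_finset_sum _ (fun d _ =>
        (momF_integrable μ b a d c).const_mul _))]
      refine Finset.sum_congr rfl fun b _ => ?_
      rw [integral_finset_sum _ (fun d _ => (momF_integrable μ b a d c).const_mul _)]
      refine Finset.sum_congr rfl fun d _ => ?_
      rw [integral_const_mul]
      rfl
    simp_rw [step]
    have hmm : ∀ a c b d : Fin n, Δ a b * Δ c d * Mom μ b a d c
        = (Δ a b * Δ c d * ((if b = a then (1:ℂ) else 0) * (if d = c then (1:ℂ) else 0))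
          + Δ a b * Δ c d * ((if b = c then (1:ℂ) else 0) * (if d = a then (1:ℂ) else 0)))
            / ((n:ℂ) * ((n:ℂ)+1)) := by
      intro a c b d
      rw [mom_master μ hinv hn b a d c]
      ring
    simp_rw [hmm, ← Finset.sum_div]
    congr 1
    have hL : ∀ a c : Fin n, (∑ b, ∑ d,
        (Δ a b * Δ c d * ((if b = a then (1:ℂ) else 0) * (if d = c then (1:ℂ) else 0))
          + Δ a b * Δ c d * ((if b = c then (1:ℂ) else 0) * (if d = a then (1:ℂ) else 0))))
        = Δ a a * Δ c c + Δ a c * Δ c a := by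
      intro a c
      simp only [Finset.sum_add_distrib]
      simp [mul_ite, ite_mul, mul_one, mul_zero, zero_mul, Finset.sum_ite_eq,
        Finset.sum_ite_eq']
    simp_rw [hL]
    rw [sq, Matrix.trace, Matrix.trace, Finset.sum_mul_sum, ← Finset.sum_add_distrib]
    refine Finset.sum_congr rfl fun a _ => ?_
    simp [Matrix.diag, Matrix.mul_apply, Finset.sum_add_distrib]

/-- Second-moment formula for the uniform measure on pure states: if `μ` is the uniform
(unitarily invariant) probability measure on the unit sphere of `ℂ^n` and `Δ` is Hermitian,
then `∫ (tr(Δ|ψ⟩⟨ψ|))² dψ = ((tr Δ)² + tr(Δ²)) / (n(n+1))`. -/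
theorem integral_trace_sq_eq {n : ℕ}
    (μ : Measure (Metric.sphere (0 : EuclideanSpace ℂ (Fin n)) 1))
    [IsProbabilityMeasure μ]
    (hinv : ∀ U : EuclideanSpace ℂ (Fin n) ≃ₗᵢ[ℂ] EuclideanSpace ℂ (Fin n),
      Measure.map (fun ψ : Metric.sphere (0 : EuclideanSpace ℂ (Fin n)) 1 =>
        (⟨U ψ.1, by
          rw [mem_sphere_zero_iff_norm, U.norm_map, ← mem_sphere_zero_iff_norm]
          exact ψ.2⟩ : Metric.sphere (0 : EuclideanSpace ℂ (Fin n)) 1)) μ = μ)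
    (Δ : Matrix (Fin n) (Fin n) ℂ) (hΔ : Δ.IsHermitian) :
    ∫ ψ : Metric.sphere (0 : EuclideanSpace ℂ (Fin n)) 1,
        ((Δ * rankOneProj (ψ : EuclideanSpace ℂ (Fin n))).trace) ^ 2 ∂μ
      = ((Δ.trace) ^ 2 + (Δ * Δ).trace) / ((n : ℂ) * ((n : ℂ) + 1)) := by
  exact integral_trace_sq_eq' μ hinv Δ
end
end

section
/- Let H be a Hermitian operator on a finite-dimensional complex Hilbert space with eigendecomposition H = Σ_k λ_k |v_k⟩⟨v_k| (the v_k forming an orthonormal eigenbasis), let ψ be a unit vector, let t ≥ 0, and let μ ≥ 0 satisfy μt ≤ π. Then |⟨ψ| e^{−iHt} |ψ⟩| ≥ cos(μt) − 2 Σ_{k : |λ_k| > μ} |⟨v_k|ψ⟩|². -/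
noncomputable section

/-- Slow time evolution on low-energy states: let `H` be a Hermitian operator on a
finite-dimensional complex Hilbert space with eigendecomposition
`H = ∑_k λ_k |v_k⟩⟨v_k|` (the `v_k` forming an orthonormal eigenbasis), let `ψ` be a
unit vector, `t ≥ 0`, and `μ ≥ 0` with `μt ≤ π`. Then
`|⟨ψ|e^{-iHt}|ψ⟩| ≥ cos(μt) − 2 ∑_{k : |λ_k| > μ} |⟨v_k|ψ⟩|²`, where
`⟨ψ|e^{-iHt}|ψ⟩ = ∑_k e^{-iλ_k t} |⟨v_k|ψ⟩|²`. -/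
theorem slow_evolution_bound {E : Type*} [NormedAddCommGroup E] [InnerProductSpace ℂ E]
    [FiniteDimensional ℂ E] {ι : Type*} [Fintype ι]
    (v : ι → E) (hv : Orthonormal ℂ v)
    (hspan : Submodule.span ℂ (Set.range v) = ⊤)
    (lam : ι → ℝ) (ψ : E) (hψ : ‖ψ‖ = 1)
    (t μ : ℝ) (ht : 0 ≤ t) (hμ : 0 ≤ μ) (hμt : μ * t ≤ Real.pi) :
    Real.cos (μ * t) -
        2 * ∑ k ∈ Finset.univ.filter fun k => μ < |lam k|, ‖(inner ℂ (v k) ψ : ℂ)‖ ^ 2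
      ≤ ‖(∑ k, Complex.exp (-Complex.I * (lam k) * t) *
          ((‖(inner ℂ (v k) ψ : ℂ)‖ : ℂ)) ^ 2)‖ := by
  set p : ι → ℝ := fun k => ‖(inner ℂ (v k) ψ : ℂ)‖ ^ 2 with hp
  have hpnn : ∀ k, 0 ≤ p k := fun k => by positivity
  -- Parseval: sum of p is 1
  let b : OrthonormalBasis ι ℂ E := OrthonormalBasis.mk hv (le_of_eq hspan.symm)
  have hsum : ∑ k, p k = 1 := by
    have h := b.repr.norm_map ψ
    rw [hψ, EuclideanSpace.norm_eq] at h
    have h2 : ∑ k, ‖b.repr ψ k‖ ^ 2 = 1 := Real.sqrt_eq_one.mp h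
    have h3 : ∀ k, b.repr ψ k = inner ℂ (v k) ψ := by
      intro k
      rw [b.repr_apply_apply]
      congr 1
      exact congrArg (fun f => f k) (OrthonormalBasis.coe_mk hv _)
    simp only [h3] at h2
    exact h2
  -- real part of each term
  have hre : ∀ k, (Complex.exp (-Complex.I * (lam k) * t) *
      ((‖(inner ℂ (v k) ψ : ℂ)‖ : ℂ)) ^ 2).re = Real.cos (lam k * t) * p k := by
    intro k
    have h1 : -Complex.I * (lam k) * t = ((-(lam k * t) : ℝ) : ℂ) * Complex.I := by
      push_cast; ring
    rw [h1, ← Complex.ofReal_pow, mul_comm]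
    rw [Complex.re_ofReal_mul, Complex.exp_ofReal_mul_I_re, Real.cos_neg, mul_comm]
  have habs : (∑ k, Complex.exp (-Complex.I * (lam k) * t) *
      ((‖(inner ℂ (v k) ψ : ℂ)‖ : ℂ)) ^ 2).re ≤ ‖(∑ k, Complex.exp (-Complex.I * (lam k) * t) *
      ((‖(inner ℂ (v k) ψ : ℂ)‖ : ℂ)) ^ 2)‖ := Complex.re_le_norm _
  refine le_trans ?_ habs
  rw [Complex.re_sum]
  simp only [hre]
  -- split the sum over the filter
  have hsplit := Finset.sum_filter_add_sum_filter_not Finset.univ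
    (fun k => μ < |lam k|) (fun k => Real.cos (lam k * t) * p k)
  rw [← hsplit]
  have hsplit2 := Finset.sum_filter_add_sum_filter_not Finset.univ
    (fun k => μ < |lam k|) p
  have hgood : Real.cos (μ * t) * ∑ k ∈ Finset.univ.filter fun k => ¬ μ < |lam k|, p k
      ≤ ∑ k ∈ Finset.univ.filter fun k => ¬ μ < |lam k|, Real.cos (lam k * t) * p k := by
    rw [Finset.mul_sum]
    refine Finset.sum_le_sum fun k hk => ?_
    simp only [Finset.mem_filter, not_lt] at hk
    refine mul_le_mul_of_nonneg_right ?_ (hpnn k)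
    have h2 : |lam k * t| ≤ μ * t := by
      rw [abs_mul, abs_of_nonneg ht]
      exact mul_le_mul_of_nonneg_right hk.2 ht
    calc Real.cos (μ * t) ≤ Real.cos |lam k * t| :=
          Real.cos_le_cos_of_nonneg_of_le_pi (abs_nonneg _) hμt h2
      _ = Real.cos (lam k * t) := Real.cos_abs _
  have hbad : (Real.cos (μ * t) - 2) * ∑ k ∈ Finset.univ.filter fun k => μ < |lam k|, p k
      ≤ ∑ k ∈ Finset.univ.filter fun k => μ < |lam k|, Real.cos (lam k * t) * p k := by
    rw [Finset.mul_sum]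
    refine Finset.sum_le_sum fun k hk => ?_
    refine mul_le_mul_of_nonneg_right ?_ (hpnn k)
    have := Real.neg_one_le_cos (lam k * t)
    have := Real.cos_le_one (μ * t)
    linarith
  have heq : Real.cos (μ * t) -
      2 * ∑ k ∈ Finset.univ.filter fun k => μ < |lam k|, p k
      = (Real.cos (μ * t) - 2) * (∑ k ∈ Finset.univ.filter fun k => μ < |lam k|, p k)
        + Real.cos (μ * t) * ∑ k ∈ Finset.univ.filter fun k => ¬ μ < |lam k|, p k := by
    have : (∑ k ∈ Finset.univ.filter fun k => μ < |lam k|, p k)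
        + ∑ k ∈ Finset.univ.filter fun k => ¬ μ < |lam k|, p k = 1 := by
      rw [hsplit2, hsum]
    linear_combination (-Real.cos (μ * t)) * this
  rw [heq]
  exact add_le_add hbad hgood
end
end

section
/- There is a universal constant C > 0 such that for all integers k, n ≥ 1 and every k-linear form f : (ℝ^n)^k → ℝ with coefficient tensor f̂, one has (Σ_{i_1,…,i_k=1}^n |f̂_{i_1,…,i_k}|^{2k/(k+1)})^{(k+1)/(2k)} ≤ C · k^{log₂ e} · ‖f‖_∞. -/
noncomputable section

namespace BHaux

def bsgn (b : Bool) : ℝ := if b then 1 else -1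

@[simp] lemma bsgn_not (b : Bool) : bsgn (!b) = - bsgn b := by cases b <;> simp [bsgn]
@[simp] lemma bsgn_sq (b : Bool) : bsgn b ^ 2 = 1 := by cases b <;> simp [bsgn]
@[simp] lemma bsgn_mul_self (b : Bool) : bsgn b * bsgn b = 1 := by cases b <;> simp [bsgn]
lemma abs_bsgn (b : Bool) : |bsgn b| = 1 := by cases b <;> simp [bsgn]

lemma sum_flip_zero {ι : Type} [Fintype ι] [DecidableEq ι] (p : ι) (G : (ι → Bool) → ℝ)
    (hG : ∀ v b, G (Function.update v p b) = G v) :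
    ∑ v : ι → Bool, bsgn (v p) * G v = 0 := by
  have hinv : Function.Involutive (fun v : ι → Bool => Function.update v p (!(v p))) := by
    intro v
    funext q
    by_cases h : q = p
    · subst h; simp
    · simp [Function.update_of_ne h]
  have hsum := Fintype.sum_bijective _ hinv.bijective
    (fun v => bsgn (v p) * G v) (fun v => - (bsgn (v p) * G v)) (by
      intro v
      have h1 : Function.update v p (!(v p)) p = !(v p) := by simp
      have h2 : G (Function.update v p (!(v p))) = G v := hG v _
      simp only [h1, h2, bsgn_not]
      ring)
  rw [Finset.sum_neg_distrib] at hsum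
  linarith

lemma card_fun_bool {ι : Type} [Fintype ι] [DecidableEq ι] :
    (Finset.univ : Finset (ι → Bool)).card = 2 ^ (Fintype.card ι) := by
  simp [Finset.card_univ, Fintype.card_fun]

lemma layer {ι κ : Type} [Fintype ι] [DecidableEq ι] [Fintype κ] (w : ι → κ → ℝ)
    (S : Finset ι) :
    (∑ v : ι → Bool, ∑ c : κ, (∑ p ∈ S, bsgn (v p) * w p c) ^ 2
       = 2 ^ (Fintype.card ι) * ∑ p ∈ S, ∑ c : κ, (w p c) ^ 2) ∧
    (∑ v : ι → Bool, (∑ c : κ, (∑ p ∈ S, bsgn (v p) * w p c) ^ 2) ^ 2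
       ≤ 3 * 2 ^ (Fintype.card ι) * (∑ p ∈ S, ∑ c : κ, (w p c) ^ 2) ^ 2) := by
  classical
  induction S using Finset.induction_on with
  | empty =>
      constructor
      · simp
      · simp
  | @insert p₀ S hp₀ ih =>
      obtain ⟨ih1, ih2⟩ := ih
      set X : (ι → Bool) → κ → ℝ := fun v c => ∑ p ∈ S, bsgn (v p) * w p c with hX
      set N : (ι → Bool) → ℝ := fun v => ∑ c : κ, (X v c) ^ 2 with hN
      set I : (ι → Bool) → ℝ := fun v => ∑ c : κ, w p₀ c * X v c with hI
      set Wp : ℝ := ∑ c : κ, (w p₀ c) ^ 2 with hWp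
      set A : ℝ := ∑ p ∈ S, ∑ c : κ, (w p c) ^ 2 with hA
      have hXupd : ∀ (v : ι → Bool) (b : Bool) (c : κ),
          X (Function.update v p₀ b) c = X v c := by
        intro v b c
        refine Finset.sum_congr rfl ?_
        intro q hq
        have hq' : q ≠ p₀ := by rintro rfl; exact hp₀ hq
        rw [Function.update_of_ne hq']
      have hNupd : ∀ (v : ι → Bool) (b : Bool), N (Function.update v p₀ b) = N v := by
        intro v b; simp only [hN]; exact Finset.sum_congr rfl fun c _ => by rw [hXupd]
      have hIupd : ∀ (v : ι → Bool) (b : Bool), I (Function.update v p₀ b) = I v := by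
        intro v b; simp only [hI]; exact Finset.sum_congr rfl fun c _ => by rw [hXupd]
      have hsum_ins : ∀ (v : ι → Bool) (c : κ),
          ∑ p ∈ insert p₀ S, bsgn (v p) * w p c = bsgn (v p₀) * w p₀ c + X v c := by
        intro v c; rw [Finset.sum_insert hp₀]
      have hWp0 : 0 ≤ Wp := Finset.sum_nonneg fun c _ => sq_nonneg _
      have hA0 : 0 ≤ A := Finset.sum_nonneg fun p _ => Finset.sum_nonneg fun c _ => sq_nonneg _
      have hpow : (0:ℝ) < 2 ^ (Fintype.card ι) := by positivity
      -- pointwise expansion of the new inner square sum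
      have hNnew : ∀ v : ι → Bool,
          ∑ c : κ, (∑ p ∈ insert p₀ S, bsgn (v p) * w p c) ^ 2
            = Wp + bsgn (v p₀) * (2 * I v) + N v := by
        intro v
        have hterm : ∀ c : κ, (∑ p ∈ insert p₀ S, bsgn (v p) * w p c) ^ 2
            = (w p₀ c) ^ 2 + bsgn (v p₀) * (2 * (w p₀ c * X v c)) + (X v c) ^ 2 := by
          intro c
          rw [hsum_ins]
          cases hb : v p₀ <;> simp [bsgn, hb] <;> try ring
        rw [Finset.sum_congr rfl fun c _ => hterm c]
        rw [Finset.sum_add_distrib, Finset.sum_add_distrib, ← Finset.mul_sum, ← Finset.mul_sum]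
        
      -- the flip-sum vanishing terms
      have hflip1 : ∑ v : ι → Bool, bsgn (v p₀) * (2 * I v) = 0 :=
        sum_flip_zero p₀ _ (fun v b => by rw [hIupd])
      have hsum_const : ∀ r : ℝ, ∑ _v : ι → Bool, r = 2 ^ (Fintype.card ι) * r := by
        intro r
        rw [Finset.sum_const, card_fun_bool, nsmul_eq_mul]
        push_cast
        ring
      constructor
      · rw [Finset.sum_congr rfl fun v _ => hNnew v]
        rw [Finset.sum_add_distrib, Finset.sum_add_distrib, hflip1, hsum_const, ih1,
          Finset.sum_insert hp₀]
        ring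
      · have hrw : ∑ v : ι → Bool, (∑ c : κ, (∑ p ∈ insert p₀ S, bsgn (v p) * w p c) ^ 2) ^ 2
            = ∑ v : ι → Bool, (Wp + bsgn (v p₀) * (2 * I v) + N v) ^ 2 :=
          Finset.sum_congr rfl fun v _ => by rw [hNnew v]
        rw [hrw]
        have hsq : ∀ v : ι → Bool, (Wp + bsgn (v p₀) * (2 * I v) + N v) ^ 2
            = (Wp + N v) ^ 2 + 4 * (I v) ^ 2 + bsgn (v p₀) * (4 * I v * (Wp + N v)) := by
          intro v
          cases hb : v p₀ <;> simp [bsgn, hb] <;> try ring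
        rw [Finset.sum_congr rfl fun v _ => hsq v]
        rw [Finset.sum_add_distrib]
        have hflip2 : ∑ v : ι → Bool, bsgn (v p₀) * (4 * I v * (Wp + N v)) = 0 :=
          sum_flip_zero p₀ _ (fun v b => by rw [hIupd, hNupd])
        rw [hflip2, add_zero, Finset.sum_add_distrib]
        -- bound ∑ (Wp + N v)^2 and ∑ 4 I^2
        have hCS : ∀ v : ι → Bool, (I v) ^ 2 ≤ Wp * N v := by
          intro v
          simpa [hI, hWp, hN] using
            Finset.sum_mul_sq_le_sq_mul_sq Finset.univ (fun c => w p₀ c) (fun c => X v c)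
        have hsumN : ∑ v : ι → Bool, N v = 2 ^ (Fintype.card ι) * A := ih1
        have hsumN2 : ∑ v : ι → Bool, (N v) ^ 2 ≤ 3 * 2 ^ (Fintype.card ι) * A ^ 2 := ih2
        have h1 : ∑ v : ι → Bool, (Wp + N v) ^ 2
            ≤ 2 ^ (Fintype.card ι) * Wp ^ 2 + 2 * Wp * (2 ^ (Fintype.card ι) * A)
              + 3 * 2 ^ (Fintype.card ι) * A ^ 2 := by
          have : ∀ v : ι → Bool, (Wp + N v) ^ 2 = Wp ^ 2 + 2 * Wp * N v + (N v) ^ 2 := by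
            intro v; ring
          rw [Finset.sum_congr rfl fun v _ => this v, Finset.sum_add_distrib,
            Finset.sum_add_distrib, hsum_const, ← Finset.mul_sum, hsumN]
          linarith [hsumN2]
        have h2 : ∑ v : ι → Bool, 4 * (I v) ^ 2 ≤ 4 * Wp * (2 ^ (Fintype.card ι) * A) := by
          calc ∑ v : ι → Bool, 4 * (I v) ^ 2 ≤ ∑ v : ι → Bool, 4 * (Wp * N v) := by
                refine Finset.sum_le_sum fun v _ => ?_
                have := hCS v; linarith
            _ = 4 * Wp * (2 ^ (Fintype.card ι) * A) := by
                rw [← Finset.mul_sum, ← Finset.mul_sum, hsumN]; ring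
        have hins : ∑ p ∈ insert p₀ S, ∑ c : κ, (w p c) ^ 2 = Wp + A := by
          rw [Finset.sum_insert hp₀]
        rw [hins]
        nlinarith [hpow, hWp0, hA0, sq_nonneg (Wp - A), mul_pos hpow (mul_pos hpow hpow)]

lemma chaos (n : ℕ) : ∀ (l : ℕ) (κ : Type) (_ : Fintype κ) (b : (Fin l → Fin n) → κ → ℝ),
    (∑ ε : Fin l → Fin n → Bool, ∑ c : κ,
        (∑ i : Fin l → Fin n, b i c * ∏ r, bsgn (ε r (i r))) ^ 2
      = ((2:ℝ) ^ n) ^ l * ∑ i : Fin l → Fin n, ∑ c : κ, (b i c) ^ 2) ∧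
    (∑ ε : Fin l → Fin n → Bool,
        (∑ c : κ, (∑ i : Fin l → Fin n, b i c * ∏ r, bsgn (ε r (i r))) ^ 2) ^ 2
      ≤ 3 ^ l * ((2:ℝ) ^ n) ^ l * (∑ i : Fin l → Fin n, ∑ c : κ, (b i c) ^ 2) ^ 2) := by
  intro l
  induction l with
  | zero =>
      intro κ _ b
      constructor
      · simp
      · simp
  | succ l ih =>
      intro κ _ b
      -- the order-l coefficient tensor with enlarged value type
      set b' : (Fin l → Fin n) → (Fin n × κ) → ℝ :=
        fun i' pc => b (Fin.cons pc.1 i') pc.2 with hb'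
      -- chaos of order l in the remaining variables
      set W : (Fin l → Fin n → Bool) → Fin n → κ → ℝ :=
        fun ε' p c => ∑ i' : Fin l → Fin n, b (Fin.cons p i') c * ∏ r, bsgn (ε' r (i' r)) with hW
      -- reindex sums over (l+1)-tuples
      have hconsSum : ∀ (τ : Type) (_ : Fintype τ) (F : (Fin (l+1) → τ) → ℝ),
          ∑ i : Fin (l+1) → τ, F i = ∑ p : τ, ∑ i' : Fin l → τ, F (Fin.cons p i') := by
        intro τ _ F
        have h1 : ∑ x : τ × (Fin l → τ), F (Fin.cons x.1 x.2)
            = ∑ p : τ, ∑ i' : Fin l → τ, F (Fin.cons p i') := Fintype.sum_prod_type _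
        rw [← h1]
        exact Fintype.sum_equiv (Fin.consEquiv (fun _ : Fin (l+1) => τ)).symm F
          (fun x => F (Fin.cons x.1 x.2))
          (fun i => by simp [Fin.consEquiv])
      have hreindex : ∀ F : (Fin (l+1) → Fin n → Bool) → ℝ,
          ∑ ε : Fin (l+1) → Fin n → Bool, F ε
            = ∑ v : Fin n → Bool, ∑ ε' : Fin l → Fin n → Bool, F (Fin.cons v ε') :=
        hconsSum (Fin n → Bool) inferInstance
      -- pointwise: the inner linear form splits off coordinate 0
      have hsplit : ∀ (v : Fin n → Bool) (ε' : Fin l → Fin n → Bool) (c : κ),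
          (∑ i : Fin (l+1) → Fin n, b i c * ∏ r, bsgn ((Fin.cons v ε' : Fin (l+1) → Fin n → Bool) r (i r)))
            = ∑ p : Fin n, bsgn (v p) * W ε' p c := by
        intro v ε' c
        rw [hconsSum (Fin n) inferInstance
          (fun i => b i c * ∏ r, bsgn ((Fin.cons v ε' : Fin (l+1) → Fin n → Bool) r (i r)))]
        refine Finset.sum_congr rfl fun p _ => ?_
        rw [Finset.mul_sum]
        refine Finset.sum_congr rfl fun i' _ => ?_
        rw [Fin.prod_univ_succ]
        simp only [Fin.cons_zero, Fin.cons_succ]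
        ring
      -- total coefficient mass is preserved
      have hmass : ∑ i' : Fin l → Fin n, ∑ pc : Fin n × κ, (b' i' pc) ^ 2
          = ∑ i : Fin (l+1) → Fin n, ∑ c : κ, (b i c) ^ 2 := by
        calc ∑ i' : Fin l → Fin n, ∑ pc : Fin n × κ, (b' i' pc) ^ 2
            = ∑ i' : Fin l → Fin n, ∑ p : Fin n, ∑ c : κ, (b (Fin.cons p i') c) ^ 2 := by
              refine Finset.sum_congr rfl fun i' _ => ?_
              exact Fintype.sum_prod_type _
          _ = ∑ p : Fin n, ∑ i' : Fin l → Fin n, ∑ c : κ, (b (Fin.cons p i') c) ^ 2 :=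
              Finset.sum_comm
          _ = ∑ i : Fin (l+1) → Fin n, ∑ c : κ, (b i c) ^ 2 :=
              (hconsSum (Fin n) inferInstance (fun i => ∑ c : κ, (b i c) ^ 2)).symm
      -- the inner square-mass identity: for fixed ε', ∑_{p,c} (W ε' p c)^2 is the
      -- value-sum of the order-l chaos with coefficients b'
      have hWmass : ∀ ε' : Fin l → Fin n → Bool,
          ∑ p : Fin n, ∑ c : κ, (W ε' p c) ^ 2
            = ∑ pc : Fin n × κ,
                (∑ i' : Fin l → Fin n, b' i' pc * ∏ r, bsgn (ε' r (i' r))) ^ 2 := by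
        intro ε'
        rw [Fintype.sum_prod_type]
      obtain ⟨ih1, ih2⟩ := ih (Fin n × κ) inferInstance b'
      constructor
      · rw [hreindex]
        have hstep : ∀ ε' : Fin l → Fin n → Bool,
            ∑ v : Fin n → Bool, ∑ c : κ,
              (∑ i : Fin (l+1) → Fin n, b i c * ∏ r, bsgn ((Fin.cons v ε' : Fin (l+1) → Fin n → Bool) r (i r))) ^ 2
            = 2 ^ n * ∑ p : Fin n, ∑ c : κ, (W ε' p c) ^ 2 := by
          intro ε'
          have := (layer (W ε') Finset.univ).1
          simp only [Fintype.card_fin] at this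
          rw [← this]
          refine Finset.sum_congr rfl fun v _ => Finset.sum_congr rfl fun c _ => ?_
          rw [hsplit v ε' c]
        rw [Finset.sum_comm]
        rw [Finset.sum_congr rfl fun ε' _ => hstep ε']
        rw [← Finset.mul_sum]
        rw [Finset.sum_congr rfl fun ε' _ => hWmass ε']
        rw [ih1, hmass]
        ring
      · rw [hreindex]
        rw [Finset.sum_comm]
        have hstep : ∀ ε' : Fin l → Fin n → Bool,
            ∑ v : Fin n → Bool,
              (∑ c : κ, (∑ i : Fin (l+1) → Fin n,
                b i c * ∏ r, bsgn ((Fin.cons v ε' : Fin (l+1) → Fin n → Bool) r (i r))) ^ 2) ^ 2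
            ≤ 3 * 2 ^ n * (∑ p : Fin n, ∑ c : κ, (W ε' p c) ^ 2) ^ 2 := by
          intro ε'
          have := (layer (W ε') Finset.univ).2
          simp only [Fintype.card_fin] at this
          refine le_trans (le_of_eq ?_) this
          refine Finset.sum_congr rfl fun v _ => ?_
          congr 1
          exact Finset.sum_congr rfl fun c _ => by rw [hsplit v ε' c]
        calc ∑ ε' : Fin l → Fin n → Bool, ∑ v : Fin n → Bool,
              (∑ c : κ, (∑ i : Fin (l+1) → Fin n,
                b i c * ∏ r, bsgn ((Fin.cons v ε' : Fin (l+1) → Fin n → Bool) r (i r))) ^ 2) ^ 2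
            ≤ ∑ ε' : Fin l → Fin n → Bool, 3 * 2 ^ n * (∑ p : Fin n, ∑ c : κ, (W ε' p c) ^ 2) ^ 2 :=
              Finset.sum_le_sum fun ε' _ => hstep ε'
          _ ≤ 3 ^ (l+1) * ((2:ℝ) ^ n) ^ (l+1) * (∑ i : Fin (l+1) → Fin n, ∑ c : κ, (b i c) ^ 2) ^ 2 := by
              rw [← Finset.mul_sum]
              rw [Finset.sum_congr rfl fun ε' _ => by rw [hWmass ε']]
              calc 3 * 2 ^ n * (∑ ε' : Fin l → Fin n → Bool, (∑ pc : Fin n × κ,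
                    (∑ i' : Fin l → Fin n, b' i' pc * ∏ r, bsgn (ε' r (i' r))) ^ 2) ^ 2)
                  ≤ 3 * 2 ^ n * (3 ^ l * ((2:ℝ) ^ n) ^ l *
                      (∑ i' : Fin l → Fin n, ∑ pc : Fin n × κ, (b' i' pc) ^ 2) ^ 2) := by
                    refine mul_le_mul_of_nonneg_left ih2 (by positivity)
                _ = 3 ^ (l+1) * ((2:ℝ) ^ n) ^ (l+1) *
                      (∑ i : Fin (l+1) → Fin n, ∑ c : κ, (b i c) ^ 2) ^ 2 := by
                    rw [hmass]; ring

lemma interp {E : Type} [Fintype E] (X : E → ℝ) (m : ℕ) (hm : 1 ≤ m) :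
    (∑ e : E, (X e) ^ 2) ^ (m + 2)
      ≤ (∑ e : E, |X e| ^ (2 * (m:ℝ) / ((m:ℝ) + 1))) ^ (m + 1) * (∑ e : E, (X e) ^ 4) := by
  have hm1 : (0:ℝ) < (m:ℝ) + 1 := by positivity
  have hm2 : (0:ℝ) < (m:ℝ) + 2 := by positivity
  set s : ℝ := 2 * (m:ℝ) / ((m:ℝ) + 1) with hs
  set u : ℝ := ((m:ℝ) + 2) / ((m:ℝ) + 1) with hu
  set v : ℝ := (m:ℝ) + 2 with hv
  set α : ℝ := 2 * (m:ℝ) / ((m:ℝ) + 2) with hα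
  set β : ℝ := 4 / ((m:ℝ) + 2) with hβ
  have hmpos : (0:ℝ) < (m:ℝ) := by exact_mod_cast hm
  have hpq : u.HolderConjugate v := by
    rw [Real.holderConjugate_iff]; constructor
    · rw [hu]; rw [lt_div_iff₀ hm1]; linarith
    · rw [hu, hv]; field_simp; ring
  have hholder := Real.inner_le_Lp_mul_Lq_of_nonneg Finset.univ hpq
    (f := fun e => |X e| ^ α) (g := fun e => |X e| ^ β)
    (fun e _ => Real.rpow_nonneg (abs_nonneg _) _)
    (fun e _ => Real.rpow_nonneg (abs_nonneg _) _)
  have hlhs : ∑ e : E, |X e| ^ α * |X e| ^ β = ∑ e : E, (X e) ^ 2 := by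
    refine Finset.sum_congr rfl fun e _ => ?_
    rw [← Real.rpow_add' (abs_nonneg _) (by rw [hα, hβ]; field_simp; positivity)]
    have h2 : α + β = 2 := by rw [hα, hβ]; field_simp; ring
    rw [h2]
    rw [show (2:ℝ) = ((2:ℕ):ℝ) by norm_num, Real.rpow_natCast, sq_abs]
  have hsum1 : ∑ e : E, (|X e| ^ α) ^ u = ∑ e : E, |X e| ^ s := by
    refine Finset.sum_congr rfl fun e _ => ?_
    rw [← Real.rpow_mul (abs_nonneg _)]
    congr 1
    rw [hα, hu, hs]; field_simp; rw [hv]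
  have hsum2 : ∑ e : E, (|X e| ^ β) ^ v = ∑ e : E, (X e) ^ 4 := by
    refine Finset.sum_congr rfl fun e _ => ?_
    rw [← Real.rpow_mul (abs_nonneg _)]
    have h4 : β * v = 4 := by rw [hβ, hv]; field_simp
    rw [h4, show (4:ℝ) = ((4:ℕ):ℝ) by norm_num, Real.rpow_natCast]
    rw [show |X e| ^ (4:ℕ) = (X e)^(4:ℕ) from by rw [← abs_pow, abs_of_nonneg (by positivity)]]
  rw [hlhs, hsum1, hsum2] at hholder
  -- raise to the (m+2)-th power
  have hQ0 : (0:ℝ) ≤ ∑ e : E, (X e) ^ 2 := Finset.sum_nonneg fun e _ => sq_nonneg _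
  have hS0 : (0:ℝ) ≤ ∑ e : E, |X e| ^ s := Finset.sum_nonneg fun e _ =>
    Real.rpow_nonneg (abs_nonneg _) _
  have hF0 : (0:ℝ) ≤ ∑ e : E, (X e) ^ 4 := Finset.sum_nonneg fun e _ => by positivity
  have hpow := pow_le_pow_left₀ hQ0 hholder (m + 2)
  refine le_trans hpow ?_
  rw [mul_pow]
  have e1 : ((∑ e : E, |X e| ^ s) ^ (1/u)) ^ (m+2) = (∑ e : E, |X e| ^ s) ^ (m+1) := by
    rw [← Real.rpow_natCast ((∑ e : E, |X e| ^ s) ^ (1/u)) (m+2), ← Real.rpow_mul hS0]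
    rw [show 1/u * ((m+2 : ℕ):ℝ) = ((m+1 : ℕ):ℝ) from by
      rw [hu]; push_cast; field_simp; rw [hv]]
    rw [Real.rpow_natCast]
  have e2 : ((∑ e : E, (X e) ^ 4) ^ (1/v)) ^ (m+2) = ∑ e : E, (X e) ^ 4 := by
    rw [← Real.rpow_natCast ((∑ e : E, (X e) ^ 4) ^ (1/v)) (m+2), ← Real.rpow_mul hF0]
    rw [show 1/v * ((m+2 : ℕ):ℝ) = 1 from by rw [hv]; push_cast; field_simp]
    rw [Real.rpow_one]
  rw [e1, e2]

lemma scalar_step (m l : ℕ) (hm : 1 ≤ m) (T Q F S1 M : ℝ) (hT : 0 ≤ T) (hS1 : 0 ≤ S1)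
    (hM : 0 < M) (hF0 : 0 ≤ F)
    (hQ : Q = M * T) (hF : F ≤ 3 ^ l * M * T ^ 2)
    (hinterp : Q ^ (m + 2) ≤ S1 ^ (m + 1) * F) :
    T ^ ((m:ℝ) / ((m:ℝ) + 1)) ≤ 3 ^ ((l:ℝ) / ((m:ℝ) + 1)) * S1 / M := by
  have hm1 : (0:ℝ) < (m:ℝ) + 1 := by positivity
  have h3l : (0:ℝ) < (3:ℝ) ^ ((l:ℝ) / ((m:ℝ) + 1)) := Real.rpow_pos_of_pos (by norm_num) _
  rcases eq_or_lt_of_le hT with hT0 | hTpos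
  · rw [← hT0, Real.zero_rpow (by positivity)]
    positivity
  -- key natural-power inequality : M^{m+1} T^m ≤ 3^l S1^{m+1}
  have hkey : M ^ (m+1) * T ^ m ≤ 3 ^ l * S1 ^ (m+1) := by
    have h1 : (M * T) ^ (m+2) ≤ S1 ^ (m+1) * (3 ^ l * M * T ^ 2) := by
      calc (M * T) ^ (m+2) = Q ^ (m+2) := by rw [hQ]
        _ ≤ S1 ^ (m+1) * F := hinterp
        _ ≤ S1 ^ (m+1) * (3 ^ l * M * T ^ 2) := by
            exact mul_le_mul_of_nonneg_left hF (by positivity)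
      -- then divide by M * T^2 > 0
    have h2 : (M * T) ^ (m+2) = (M ^ (m+1) * T ^ m) * (M * T ^ 2) := by ring
    have h3 : S1 ^ (m+1) * (3 ^ l * M * T ^ 2) = (3 ^ l * S1 ^ (m+1)) * (M * T ^ 2) := by ring
    rw [h2, h3] at h1
    exact le_of_mul_le_mul_right h1 (by positivity)
  -- compare (m*(m+1))-th powers
  have hgoal_pow : (T ^ ((m:ℝ) / ((m:ℝ) + 1))) ^ (m * (m+1))
      ≤ ((3:ℝ) ^ ((l:ℝ) / ((m:ℝ) + 1)) * S1 / M) ^ (m * (m+1)) := by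
    have eL : (T ^ ((m:ℝ) / ((m:ℝ) + 1))) ^ (m * (m+1)) = T ^ (m * m) := by
      rw [← Real.rpow_natCast (T ^ ((m:ℝ) / ((m:ℝ) + 1))) (m * (m+1)),
        ← Real.rpow_mul hT]
      rw [show (m:ℝ) / ((m:ℝ) + 1) * ((m * (m+1) : ℕ):ℝ) = ((m * m : ℕ):ℝ) from by
        push_cast; field_simp]
      rw [Real.rpow_natCast]
    have e3 : ((3:ℝ) ^ ((l:ℝ) / ((m:ℝ) + 1))) ^ (m * (m+1)) = 3 ^ (l * m) := by
      rw [← Real.rpow_natCast ((3:ℝ) ^ ((l:ℝ) / ((m:ℝ) + 1))) (m * (m+1)),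
        ← Real.rpow_mul (by norm_num : (0:ℝ) ≤ 3)]
      rw [show (l:ℝ) / ((m:ℝ) + 1) * ((m * (m+1) : ℕ):ℝ) = ((l * m : ℕ):ℝ) from by
        push_cast; field_simp]
      rw [Real.rpow_natCast]
    rw [eL, div_pow, mul_pow, e3]
    -- from hkey : raise to the m-th power
    have hkeym := pow_le_pow_left₀ (by positivity : (0:ℝ) ≤ M ^ (m+1) * T ^ m) hkey m
    rw [mul_pow, mul_pow, ← pow_mul, ← pow_mul, ← pow_mul, ← pow_mul] at hkeym
    rw [le_div_iff₀ (by positivity : (0:ℝ) < M ^ (m * (m+1)))]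
    calc T ^ (m * m) * M ^ (m * (m+1)) = M ^ ((m+1) * m) * T ^ (m * m) := by ring
      _ ≤ 3 ^ (l * m) * S1 ^ ((m+1) * m) := hkeym
      _ = 3 ^ (l * m) * S1 ^ (m * (m+1)) := by ring
  have hmn0 : m * (m+1) ≠ 0 := by positivity
  exact (pow_le_pow_iff_left₀ (Real.rpow_nonneg hT _) (by positivity) hmn0).1 hgoal_pow

lemma Lp_sum_le {J ιI : Type} [Fintype J] [DecidableEq ιI] (T : Finset ιI) (F : ιI → J → ℝ)
    (hF : ∀ i j, 0 ≤ F i j) {r : ℝ} (hr : 1 ≤ r) :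
    (∑ j : J, (∑ i ∈ T, F i j) ^ r) ^ (1/r) ≤ ∑ i ∈ T, (∑ j : J, (F i j) ^ r) ^ (1/r) := by
  have hr0 : 0 < r := lt_of_lt_of_le one_pos hr
  induction T using Finset.induction_on with
  | empty =>
      simp only [Finset.sum_empty]
      rw [Real.zero_rpow hr0.ne', Finset.sum_const_zero,
        Real.zero_rpow (one_div_ne_zero hr0.ne')]
  | @insert i₀ S hi₀ ih =>
      have h1 : ∀ j : J, ∑ i ∈ insert i₀ S, F i j = F i₀ j + ∑ i ∈ S, F i j := by
        intro j; rw [Finset.sum_insert hi₀]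
      rw [Finset.sum_insert hi₀]
      calc (∑ j : J, (∑ i ∈ insert i₀ S, F i j) ^ r) ^ (1/r)
          = (∑ j : J, |F i₀ j + ∑ i ∈ S, F i j| ^ r) ^ (1/r) := by
            congr 1
            refine Finset.sum_congr rfl fun j _ => ?_
            rw [h1 j, abs_of_nonneg (add_nonneg (hF i₀ j) (Finset.sum_nonneg fun i _ => hF i j))]
        _ ≤ (∑ j : J, |F i₀ j| ^ r) ^ (1/r) + (∑ j : J, |∑ i ∈ S, F i j| ^ r) ^ (1/r) :=
            Real.Lp_add_le Finset.univ _ _ hr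
        _ = (∑ j : J, (F i₀ j) ^ r) ^ (1/r) + (∑ j : J, (∑ i ∈ S, F i j) ^ r) ^ (1/r) := by
            congr 2
            · exact Finset.sum_congr rfl fun j _ => by rw [abs_of_nonneg (hF i₀ j)]
            · exact Finset.sum_congr rfl fun j _ => by
                rw [abs_of_nonneg (Finset.sum_nonneg fun i _ => hF i j)]
        _ ≤ (∑ j : J, (F i₀ j) ^ r) ^ (1/r) + ∑ i ∈ S, (∑ j : J, (F i j) ^ r) ^ (1/r) := by
            exact add_le_add_right ih _

lemma blei {J I : Type} [Fintype J] [Fintype I] (a : J → I → ℝ) (m l : ℕ)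
    (hm : 1 ≤ m) (hl : 1 ≤ l) :
    (∑ j : J, ∑ i : I, |a j i| ^ (2 * ((m:ℝ)+(l:ℝ)) / (((m:ℝ)+(l:ℝ)) + 1)))
        ^ ((((m:ℝ)+(l:ℝ)) + 1) / (2 * ((m:ℝ)+(l:ℝ))))
      ≤ (∑ j : J, (∑ i : I, (a j i) ^ 2) ^ ((m:ℝ)/((m:ℝ)+1)))
          ^ (((m:ℝ)+1)/(2*((m:ℝ)+(l:ℝ))))
        * (∑ i : I, (∑ j : J, (a j i) ^ 2) ^ ((l:ℝ)/((l:ℝ)+1)))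
          ^ (((l:ℝ)+1)/(2*((m:ℝ)+(l:ℝ)))) := by
  classical
  have hm0 : (0:ℝ) < (m:ℝ) := by exact_mod_cast hm
  have hl0 : (0:ℝ) < (l:ℝ) := by exact_mod_cast hl
  set K : ℝ := (m:ℝ) + (l:ℝ) with hK
  have hK0 : 0 < K := by positivity
  have hK1 : 0 < K + 1 := by positivity
  set ρ : ℝ := 2 * K / (K + 1) with hρ
  have hρ0 : 0 < ρ := by positivity
  set t : ℝ := 2 * (l:ℝ) / ((l:ℝ) + 1) with ht
  have ht0 : 0 < t := by positivity
  set u₁ : ℝ := (K + 1) / (m:ℝ) with hu₁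
  set v₁ : ℝ := (K + 1) / ((l:ℝ) + 1) with hv₁
  set u₂ : ℝ := (K + 1) / ((m:ℝ) + 1) with hu₂
  set v₂ : ℝ := (K + 1) / (l:ℝ) with hv₂
  set x₁ : ℝ := 2 / u₁ with hx₁
  set x₂ : ℝ := t / v₁ with hx₂
  have hx₁0 : 0 < x₁ := by positivity
  have hx₂0 : 0 < x₂ := by positivity
  have hx₁₂ : x₁ + x₂ = ρ := by
    rw [hx₁, hx₂, hu₁, hv₁, ht, hρ, hK]; field_simp
  have hpq₁ : u₁.HolderConjugate v₁ := by
    rw [Real.holderConjugate_iff]; constructor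
    · rw [hu₁, lt_div_iff₀ hm0, hK]; linarith
    · rw [hu₁, hv₁]; field_simp; rw [hK]; ring
  have hpq₂ : u₂.HolderConjugate v₂ := by
    rw [Real.holderConjugate_iff]; constructor
    · rw [hu₂, lt_div_iff₀ (by positivity : (0:ℝ) < (m:ℝ)+1), hK]; linarith
    · rw [hu₂, hv₂]; field_simp; rw [hK]; ring
  set R : J → ℝ := fun j => ∑ i : I, (a j i) ^ 2 with hR
  set Z : J → ℝ := fun j => ∑ i : I, |a j i| ^ t with hZ
  have hR0 : ∀ j, 0 ≤ R j := fun j => Finset.sum_nonneg fun i _ => sq_nonneg _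
  have hZ0 : ∀ j, 0 ≤ Z j := fun j => Finset.sum_nonneg fun i _ =>
    Real.rpow_nonneg (abs_nonneg _) _
  -- inner Hölder, for each j
  have hinner : ∀ j : J, ∑ i : I, |a j i| ^ ρ ≤ R j ^ (1/u₁) * Z j ^ (1/v₁) := by
    intro j
    have hh := Real.inner_le_Lp_mul_Lq_of_nonneg Finset.univ hpq₁
      (f := fun i => |a j i| ^ x₁) (g := fun i => |a j i| ^ x₂)
      (fun i _ => Real.rpow_nonneg (abs_nonneg _) _)
      (fun i _ => Real.rpow_nonneg (abs_nonneg _) _)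
    have h1 : ∑ i : I, |a j i| ^ x₁ * |a j i| ^ x₂ = ∑ i : I, |a j i| ^ ρ := by
      refine Finset.sum_congr rfl fun i _ => ?_
      rw [← Real.rpow_add' (abs_nonneg _) (by rw [hx₁₂]; positivity), hx₁₂]
    have h2 : ∑ i : I, (|a j i| ^ x₁) ^ u₁ = R j := by
      refine Finset.sum_congr rfl fun i _ => ?_
      rw [← Real.rpow_mul (abs_nonneg _)]
      rw [show x₁ * u₁ = 2 from by rw [hx₁]; field_simp; exact div_self (ne_of_gt (by rw [hu₁]; positivity))]
      rw [show (2:ℝ) = ((2:ℕ):ℝ) by norm_num, Real.rpow_natCast, sq_abs]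
    have h3 : ∑ i : I, (|a j i| ^ x₂) ^ v₁ = Z j := by
      refine Finset.sum_congr rfl fun i _ => ?_
      rw [← Real.rpow_mul (abs_nonneg _)]
      rw [show x₂ * v₁ = t from by rw [hx₂]; field_simp; exact div_self (ne_of_gt (by rw [hv₁]; positivity))]
    rw [h1, h2, h3] at hh
    exact hh
  -- outer Hölder
  have houter : ∑ j : J, ∑ i : I, |a j i| ^ ρ
      ≤ (∑ j : J, R j ^ ((m:ℝ)/((m:ℝ)+1))) ^ (1/u₂)
        * (∑ j : J, Z j ^ (2/t)) ^ (1/v₂) := by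
    have hh := Real.inner_le_Lp_mul_Lq_of_nonneg Finset.univ hpq₂
      (f := fun j => R j ^ (1/u₁)) (g := fun j => Z j ^ (1/v₁))
      (fun j _ => Real.rpow_nonneg (hR0 j) _)
      (fun j _ => Real.rpow_nonneg (hZ0 j) _)
    have h2 : ∑ j : J, (R j ^ (1/u₁)) ^ u₂ = ∑ j : J, R j ^ ((m:ℝ)/((m:ℝ)+1)) := by
      refine Finset.sum_congr rfl fun j _ => ?_
      rw [← Real.rpow_mul (hR0 j)]
      congr 1
      rw [hu₁, hu₂]; field_simp
    have h3 : ∑ j : J, (Z j ^ (1/v₁)) ^ v₂ = ∑ j : J, Z j ^ (2/t) := by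
      refine Finset.sum_congr rfl fun j _ => ?_
      rw [← Real.rpow_mul (hZ0 j)]
      congr 1
      rw [hv₁, hv₂, ht]; field_simp
    rw [h2, h3] at hh
    refine le_trans (Finset.sum_le_sum fun j _ => hinner j) hh
  -- Minkowski for the second factor
  have hmink : (∑ j : J, Z j ^ (2/t)) ^ (t/2)
      ≤ ∑ i : I, (∑ j : J, (a j i) ^ 2) ^ ((l:ℝ)/((l:ℝ)+1)) := by
    have ht2 : (1:ℝ) ≤ 2/t := by
      rw [le_div_iff₀ ht0, one_mul, ht, div_le_iff₀ (by positivity : (0:ℝ) < (l:ℝ)+1)]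
      linarith
    have hmk := Lp_sum_le (Finset.univ : Finset I) (fun i j => |a j i| ^ t)
      (fun i j => Real.rpow_nonneg (abs_nonneg _) _) ht2
    have e1 : (1:ℝ)/(2/t) = t/2 := by rw [one_div_div]
    rw [e1] at hmk
    have e2 : ∀ i : I, ∑ j : J, (|a j i| ^ t) ^ (2/t) = ∑ j : J, (a j i) ^ 2 := by
      intro i
      refine Finset.sum_congr rfl fun j _ => ?_
      rw [← Real.rpow_mul (abs_nonneg _)]
      rw [show t * (2/t) = 2 from by field_simp]
      rw [show (2:ℝ) = ((2:ℕ):ℝ) by norm_num, Real.rpow_natCast, sq_abs]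
    calc (∑ j : J, Z j ^ (2/t)) ^ (t/2)
        = (∑ j : J, (∑ i : I, |a j i| ^ t) ^ (2/t)) ^ (t/2) := rfl
      _ ≤ ∑ i : I, (∑ j : J, (|a j i| ^ t) ^ (2/t)) ^ (t/2) := hmk
      _ = ∑ i : I, (∑ j : J, (a j i) ^ 2) ^ ((l:ℝ)/((l:ℝ)+1)) := by
          refine Finset.sum_congr rfl fun i _ => ?_
          rw [e2 i]
          congr 1
          rw [ht]; field_simp
  -- combine
  set M1 : ℝ := ∑ j : J, R j ^ ((m:ℝ)/((m:ℝ)+1)) with hM1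
  set M2 : ℝ := ∑ i : I, (∑ j : J, (a j i) ^ 2) ^ ((l:ℝ)/((l:ℝ)+1)) with hM2
  have hM10 : 0 ≤ M1 := Finset.sum_nonneg fun j _ => Real.rpow_nonneg (hR0 j) _
  have hM20 : 0 ≤ M2 := Finset.sum_nonneg fun i _ =>
    Real.rpow_nonneg (Finset.sum_nonneg fun j _ => sq_nonneg _) _
  have hZsum0 : 0 ≤ ∑ j : J, Z j ^ (2/t) :=
    Finset.sum_nonneg fun j _ => Real.rpow_nonneg (hZ0 j) _
  -- second factor bound
  have hfac2 : (∑ j : J, Z j ^ (2/t)) ^ (1/v₂) ≤ M2 ^ (((l:ℝ)+1)/(K+1)) := by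
    have h := Real.rpow_le_rpow (Real.rpow_nonneg hZsum0 _) hmink
      (le_of_lt (by positivity : (0:ℝ) < 2/(t*v₂)))
    rw [← Real.rpow_mul hZsum0] at h
    rw [show t/2 * (2/(t*v₂)) = 1/v₂ from by field_simp] at h
    refine le_trans h ?_
    apply le_of_eq
    congr 1
    rw [ht, hv₂]; field_simp
  have hsum0 : 0 ≤ ∑ j : J, ∑ i : I, |a j i| ^ ρ :=
    Finset.sum_nonneg fun j _ => Finset.sum_nonneg fun i _ =>
      Real.rpow_nonneg (abs_nonneg _) _
  have hfinal : ∑ j : J, ∑ i : I, |a j i| ^ ρ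
      ≤ M1 ^ (1/u₂) * M2 ^ (((l:ℝ)+1)/(K+1)) := by
    refine le_trans houter ?_
    exact mul_le_mul_of_nonneg_left hfac2 (Real.rpow_nonneg hM10 _)
  -- take ρ-th roots
  have h := Real.rpow_le_rpow hsum0 hfinal (le_of_lt (by positivity : (0:ℝ) < (K+1)/(2*K)))
  rw [Real.mul_rpow (Real.rpow_nonneg hM10 _) (Real.rpow_nonneg hM20 _)] at h
  rw [← Real.rpow_mul hM10, ← Real.rpow_mul hM20] at h
  rw [show 1/u₂ * ((K+1)/(2*K)) = ((m:ℝ)+1)/(2*K) from by rw [hu₂]; field_simp] at h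
  rw [show ((l:ℝ)+1)/(K+1) * ((K+1)/(2*K)) = ((l:ℝ)+1)/(2*K) from by field_simp] at h
  exact h

lemma block_bound (m l n : ℕ) (hm : 1 ≤ m) (hl : 1 ≤ l)
    (a : (Fin m → Fin n) → (Fin l → Fin n) → ℝ) (C : ℝ) (hC : 0 ≤ C)
    (hIH : ∀ ε : Fin l → Fin n → Bool,
      ∑ j : Fin m → Fin n,
        |∑ i : Fin l → Fin n, a j i * ∏ r, bsgn (ε r (i r))| ^ (2 * (m:ℝ) / ((m:ℝ) + 1))
        ≤ C ^ (2 * (m:ℝ) / ((m:ℝ) + 1))) :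
    ∑ j : Fin m → Fin n, (∑ i : Fin l → Fin n, (a j i) ^ 2) ^ ((m:ℝ) / ((m:ℝ) + 1))
      ≤ ((3:ℝ) ^ ((l:ℝ) / (2 * (m:ℝ))) * C) ^ (2 * (m:ℝ) / ((m:ℝ) + 1)) := by
  have hm0 : (0:ℝ) < (m:ℝ) := by exact_mod_cast hm
  have hm1 : (0:ℝ) < (m:ℝ) + 1 := by positivity
  set s : ℝ := 2 * (m:ℝ) / ((m:ℝ) + 1) with hs
  have hs0 : 0 < s := by positivity
  set M : ℝ := ((2:ℝ) ^ n) ^ l with hM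
  have hM0 : (0:ℝ) < M := by positivity
  set g : (Fin m → Fin n) → (Fin l → Fin n → Bool) → ℝ :=
    fun j ε => ∑ i : Fin l → Fin n, a j i * ∏ r, bsgn (ε r (i r)) with hg
  set T : (Fin m → Fin n) → ℝ := fun j => ∑ i : Fin l → Fin n, (a j i) ^ 2 with hT
  set S1 : (Fin m → Fin n) → ℝ := fun j => ∑ ε : Fin l → Fin n → Bool, |g j ε| ^ s with hS1
  have hT0 : ∀ j, 0 ≤ T j := fun j => Finset.sum_nonneg fun i _ => sq_nonneg _
  have hS10 : ∀ j, 0 ≤ S1 j := fun j => Finset.sum_nonneg fun ε _ =>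
    Real.rpow_nonneg (abs_nonneg _) _
  -- pointwise bound via the chaos moments
  have hpt : ∀ j : Fin m → Fin n,
      T j ^ ((m:ℝ) / ((m:ℝ) + 1)) ≤ 3 ^ ((l:ℝ) / ((m:ℝ) + 1)) * S1 j / M := by
    intro j
    obtain ⟨h2, h4⟩ := chaos n l Unit inferInstance (fun i _ => a j i)
    simp only [Fintype.sum_unique] at h2 h4
    have hQ : ∑ ε : Fin l → Fin n → Bool, (g j ε) ^ 2 = M * T j := by
      rw [hg, hT, hM]; exact h2
    have hF : ∑ ε : Fin l → Fin n → Bool, (g j ε) ^ 4 ≤ 3 ^ l * M * (T j) ^ 2 := by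
      have : ∀ ε : Fin l → Fin n → Bool, ((g j ε) ^ 2) ^ 2 = (g j ε) ^ 4 := fun ε => by ring
      calc ∑ ε : Fin l → Fin n → Bool, (g j ε) ^ 4
          = ∑ ε : Fin l → Fin n → Bool, ((g j ε) ^ 2) ^ 2 := by
            exact Finset.sum_congr rfl fun ε _ => (this ε).symm
        _ ≤ 3 ^ l * M * (T j) ^ 2 := h4
    exact scalar_step m l hm (T j) _ _ (S1 j) M (hT0 j) (hS10 j) hM0
      (Finset.sum_nonneg fun ε _ => by positivity) hQ hF (interp (g j) m hm)
  -- sum over j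
  have hsum : ∑ j : Fin m → Fin n, T j ^ ((m:ℝ) / ((m:ℝ) + 1))
      ≤ 3 ^ ((l:ℝ) / ((m:ℝ) + 1)) / M * ∑ j : Fin m → Fin n, S1 j := by
    rw [Finset.mul_sum]
    refine Finset.sum_le_sum fun j _ => ?_
    calc T j ^ ((m:ℝ) / ((m:ℝ) + 1)) ≤ 3 ^ ((l:ℝ) / ((m:ℝ) + 1)) * S1 j / M := hpt j
      _ = 3 ^ ((l:ℝ) / ((m:ℝ) + 1)) / M * S1 j := by ring
  have hS1sum : ∑ j : Fin m → Fin n, S1 j ≤ M * C ^ s := by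
    rw [hS1]
    rw [Finset.sum_comm]
    calc ∑ ε : Fin l → Fin n → Bool, ∑ j : Fin m → Fin n, |g j ε| ^ s
        ≤ ∑ _ε : Fin l → Fin n → Bool, C ^ s := Finset.sum_le_sum fun ε _ => hIH ε
      _ = M * C ^ s := by
          rw [Finset.sum_const, Finset.card_univ, nsmul_eq_mul]
          congr 1
          rw [hM]
          rw [show Fintype.card (Fin l → Fin n → Bool) = (2 ^ n) ^ l from by
            rw [Fintype.card_fun]
            congr 1
            · rw [Fintype.card_fun]; simp
            · simp]
          push_cast
          ring
  have hfinal : ∑ j : Fin m → Fin n, T j ^ ((m:ℝ) / ((m:ℝ) + 1))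
      ≤ 3 ^ ((l:ℝ) / ((m:ℝ) + 1)) * C ^ s := by
    refine le_trans hsum ?_
    calc 3 ^ ((l:ℝ) / ((m:ℝ) + 1)) / M * ∑ j : Fin m → Fin n, S1 j
        ≤ 3 ^ ((l:ℝ) / ((m:ℝ) + 1)) / M * (M * C ^ s) := by
          refine mul_le_mul_of_nonneg_left hS1sum (by positivity)
      _ = 3 ^ ((l:ℝ) / ((m:ℝ) + 1)) * C ^ s := by field_simp
  refine le_trans hfinal (le_of_eq ?_)
  rw [Real.mul_rpow (by positivity) hC, ← Real.rpow_mul (by norm_num : (0:ℝ) ≤ 3)]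
  congr 2
  rw [hs]
  field_simp

lemma rpow_inv_le {X Y p q : ℝ} (hX : 0 ≤ X) (hY : 0 ≤ Y) (hq : 0 ≤ q) (hpq : p * q = 1)
    (h : X ^ p ≤ Y) : X ≤ Y ^ q := by
  have h2 : (X ^ p) ^ q ≤ Y ^ q := Real.rpow_le_rpow (Real.rpow_nonneg hX _) h hq
  rwa [← Real.rpow_mul hX, hpq, Real.rpow_one] at h2

lemma bsgn_decide (y : ℝ) : y * bsgn (decide (0 ≤ y)) = |y| := by
  by_cases h : 0 ≤ y
  · simp [bsgn, h, abs_of_nonneg h]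
  · simp only [bsgn, h, decide_eq_true_eq, if_neg, decide_false]
    rw [abs_of_neg (not_le.mp h)]
    simp

def splitEquiv (m l : ℕ) (τ : Type) : ((Fin m → τ) × (Fin l → τ)) ≃ (Fin (m + l) → τ) :=
  (Equiv.sumArrowEquivProdArrow (Fin m) (Fin l) τ).symm.trans
    (Equiv.arrowCongr finSumFinEquiv (Equiv.refl τ))

lemma splitEquiv_comp {m l : ℕ} {τ : Type} (j : Fin m → τ) (i : Fin l → τ)
    (z : Fin m ⊕ Fin l) :
    splitEquiv m l τ (j, i) (finSumFinEquiv z) = Sum.elim j i z := by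
  show (Equiv.arrowCongr finSumFinEquiv (Equiv.refl τ))
    ((Equiv.sumArrowEquivProdArrow (Fin m) (Fin l) τ).symm (j, i)) (finSumFinEquiv z)
      = Sum.elim j i z
  simp [Equiv.sumArrowEquivProdArrow, Equiv.arrowCongr]

lemma splitSum {m l n : ℕ} (F : (Fin (m + l) → Fin n) → ℝ) :
    ∑ I : Fin (m + l) → Fin n, F I
      = ∑ j : Fin m → Fin n, ∑ i : Fin l → Fin n, F (splitEquiv m l (Fin n) (j, i)) := by
  rw [← Equiv.sum_comp (splitEquiv m l (Fin n)) F, Fintype.sum_prod_type]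

lemma splitChar {m l n : ℕ} (x : Fin m → Fin n → Bool) (ε : Fin l → Fin n → Bool)
    (j : Fin m → Fin n) (i : Fin l → Fin n) :
    ∏ r : Fin (m + l), bsgn ((splitEquiv m l (Fin n → Bool) (x, ε)) r
        ((splitEquiv m l (Fin n) (j, i)) r))
      = (∏ r : Fin m, bsgn (x r (j r))) * ∏ r : Fin l, bsgn (ε r (i r)) := by
  rw [← Equiv.prod_comp finSumFinEquiv
    (fun r => bsgn ((splitEquiv m l (Fin n → Bool) (x, ε)) r
      ((splitEquiv m l (Fin n) (j, i)) r)))]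
  rw [Fintype.prod_sum_type]
  congr 1
  · exact Finset.prod_congr rfl fun r _ => by
      rw [splitEquiv_comp, splitEquiv_comp]; simp
  · exact Finset.prod_congr rfl fun r _ => by
      rw [splitEquiv_comp, splitEquiv_comp]; simp

lemma BH_main : ∀ k : ℕ, 1 ≤ k → ∀ n : ℕ, ∀ c : (Fin k → Fin n) → ℝ, ∀ B : ℝ,
    (∀ x : Fin k → Fin n → Bool,
      |∑ i : Fin k → Fin n, c i * ∏ j, bsgn (x j (i j))| ≤ B) →
    (∑ i : Fin k → Fin n, |c i| ^ (2 * (k:ℝ) / ((k:ℝ) + 1))) ^ (((k:ℝ) + 1) / (2 * (k:ℝ)))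
      ≤ Real.sqrt 3 ^ (Nat.clog 2 k) * B := by
  intro k
  induction k using Nat.strong_induction_on with
  | _ k ih =>
  intro hk n c B hbound
  have hB0 : 0 ≤ B := le_trans (abs_nonneg _) (hbound (fun _ _ => true))
  have hsqrt3 : (1:ℝ) ≤ Real.sqrt 3 := by
    rw [show (1:ℝ) = Real.sqrt 1 from (Real.sqrt_one).symm]
    exact Real.sqrt_le_sqrt (by norm_num)
  rcases eq_or_lt_of_le hk with hk1 | hk2
  · -- base case k = 1
    subst hk1
    rw [show 2 * ((1:ℕ):ℝ) / (((1:ℕ):ℝ) + 1) = 1 by norm_num,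
      show (((1:ℕ):ℝ) + 1) / (2 * ((1:ℕ):ℝ)) = 1 by norm_num]
    simp only [Real.rpow_one]
    rw [Nat.clog_one_right, pow_zero, one_mul]
    set x : Fin 1 → Fin n → Bool := fun _ p => decide (0 ≤ c (fun _ => p)) with hx
    have hkey : ∑ i : Fin 1 → Fin n, c i * ∏ j, bsgn (x j (i j))
        = ∑ i : Fin 1 → Fin n, |c i| := by
      refine Finset.sum_congr rfl fun i _ => ?_
      rw [Fin.prod_univ_one]
      have hci : (fun _ : Fin 1 => i 0) = i := by
        funext j
        rw [Subsingleton.elim (0 : Fin 1) j]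
      have : x 0 (i 0) = decide (0 ≤ c i) := by rw [hx]; simp only []; rw [hci]
      rw [this, bsgn_decide]
    have h := hbound x
    rw [hkey, abs_of_nonneg (Finset.sum_nonneg fun i _ => abs_nonneg _)] at h
    exact h
  · -- inductive case: 2 ≤ k
    have hk2' : 2 ≤ k := hk2
    obtain ⟨m, l, hm, hl, hlm, hmk, hlk, hclog, hkml⟩ :
        ∃ m l : ℕ, 1 ≤ m ∧ 1 ≤ l ∧ l ≤ m ∧ m < k ∧ l < k ∧
          Nat.clog 2 k = Nat.clog 2 m + 1 ∧ k = m + l := by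
      refine ⟨(k+1)/2, k/2, by omega, by omega, by omega, by omega, by omega, ?_, by omega⟩
      have h := Nat.clog_of_two_le (by norm_num : 1 < 2) hk2'
      have h2 : (k + 2 - 1) / 2 = (k+1)/2 := by omega
      rw [h, h2]
    subst hkml
    have hm0 : (0:ℝ) < (m:ℝ) := by exact_mod_cast hm
    have hl0 : (0:ℝ) < (l:ℝ) := by exact_mod_cast hl
    have hK0 : (0:ℝ) < (m:ℝ) + (l:ℝ) := by positivity
    set Dm : ℝ := Real.sqrt 3 ^ (Nat.clog 2 m) with hDm
    set Dl : ℝ := Real.sqrt 3 ^ (Nat.clog 2 l) with hDl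
    have hDm0 : 0 ≤ Dm := pow_nonneg (Real.sqrt_nonneg 3) _
    have hDl0 : 0 ≤ Dl := pow_nonneg (Real.sqrt_nonneg 3) _
    have hDlm : Dl ≤ Dm := pow_le_pow_right₀ hsqrt3 (Nat.clog_mono_right 2 hlm)
    set a : (Fin m → Fin n) → (Fin l → Fin n) → ℝ :=
      fun j i => c (splitEquiv m l (Fin n) (j, i)) with ha
    -- the transferred boundedness
    have hb2 : ∀ (y : Fin m → Fin n → Bool) (ε : Fin l → Fin n → Bool),
        |∑ j : Fin m → Fin n, ∑ i : Fin l → Fin n,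
          a j i * ((∏ r : Fin m, bsgn (y r (j r))) * ∏ r : Fin l, bsgn (ε r (i r)))| ≤ B := by
      intro y ε
      have h := hbound (splitEquiv m l (Fin n → Bool) (y, ε))
      rw [splitSum (fun I => c I *
        ∏ r, bsgn ((splitEquiv m l (Fin n → Bool) (y, ε)) r (I r)))] at h
      refine le_of_eq_of_le ?_ h
      congr 1
      refine Finset.sum_congr rfl fun j _ => Finset.sum_congr rfl fun i _ => ?_
      rw [splitChar]
    -- bound for the m-block linear forms
    have hIHm : ∀ ε : Fin l → Fin n → Bool,
        ∑ j : Fin m → Fin n,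
          |∑ i : Fin l → Fin n, a j i * ∏ r, bsgn (ε r (i r))| ^ (2 * (m:ℝ) / ((m:ℝ) + 1))
          ≤ (Dm * B) ^ (2 * (m:ℝ) / ((m:ℝ) + 1)) := by
      intro ε
      have hbd : ∀ y : Fin m → Fin n → Bool,
          |∑ j : Fin m → Fin n,
            (∑ i : Fin l → Fin n, a j i * ∏ r, bsgn (ε r (i r))) * ∏ r, bsgn (y r (j r))| ≤ B := by
        intro y
        refine le_of_eq_of_le ?_ (hb2 y ε)
        congr 1
        refine Finset.sum_congr rfl fun j _ => ?_
        rw [Finset.sum_mul]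
        refine Finset.sum_congr rfl fun i _ => ?_
        ring
      have h := ih m hmk hm n
        (fun j => ∑ i : Fin l → Fin n, a j i * ∏ r, bsgn (ε r (i r))) B hbd
      refine rpow_inv_le (Finset.sum_nonneg fun j _ => Real.rpow_nonneg (abs_nonneg _) _)
        (by positivity) (by positivity) (by field_simp) h
    have hM1 := block_bound m l n hm hl a (Dm * B) (by positivity) hIHm
    -- bound for the l-block linear forms (transposed)
    have hIHl : ∀ y : Fin m → Fin n → Bool,
        ∑ i : Fin l → Fin n,
          |∑ j : Fin m → Fin n, a j i * ∏ r, bsgn (y r (j r))| ^ (2 * (l:ℝ) / ((l:ℝ) + 1))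
          ≤ (Dl * B) ^ (2 * (l:ℝ) / ((l:ℝ) + 1)) := by
      intro y
      have hbd : ∀ ε : Fin l → Fin n → Bool,
          |∑ i : Fin l → Fin n,
            (∑ j : Fin m → Fin n, a j i * ∏ r, bsgn (y r (j r))) * ∏ r, bsgn (ε r (i r))| ≤ B := by
        intro ε
        refine le_of_eq_of_le ?_ (hb2 y ε)
        rw [Finset.sum_comm (s := (Finset.univ : Finset (Fin m → Fin n)))]
        congr 1
        refine Finset.sum_congr rfl fun i _ => ?_
        rw [Finset.sum_mul]
        refine Finset.sum_congr rfl fun j _ => ?_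
        ring
      have h := ih l hlk hl n
        (fun i => ∑ j : Fin m → Fin n, a j i * ∏ r, bsgn (y r (j r))) B hbd
      refine rpow_inv_le (Finset.sum_nonneg fun i _ => Real.rpow_nonneg (abs_nonneg _) _)
        (by positivity) (by positivity) (by field_simp) h
    have hM2 := block_bound l m n hl hm (fun i j => a j i) (Dl * B) (by positivity) hIHl
    -- apply Blei's interpolation
    have hblei := blei a m l hm hl
    -- rewrite the goal through the splitting
    push_cast
    rw [splitSum (fun I => |c I| ^ (2 * ((m:ℝ) + (l:ℝ)) / ((m:ℝ) + (l:ℝ) + 1)))]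
    refine le_trans hblei ?_
    -- now bound the two factors
    set sm : ℝ := 2 * (m:ℝ) / ((m:ℝ) + 1) with hsm
    set sl : ℝ := 2 * (l:ℝ) / ((l:ℝ) + 1) with hsl
    set P1 : ℝ := (3:ℝ) ^ ((l:ℝ) / (2 * (m:ℝ))) * (Dm * B) with hP1
    set P2 : ℝ := (3:ℝ) ^ ((m:ℝ) / (2 * (l:ℝ))) * (Dl * B) with hP2
    have hP10 : 0 ≤ P1 := by positivity
    have hP20 : 0 ≤ P2 := by positivity
    have hM1' : (∑ j : Fin m → Fin n,
        (∑ i : Fin l → Fin n, (a j i) ^ 2) ^ ((m:ℝ)/((m:ℝ)+1))) ^ (((m:ℝ)+1)/(2*((m:ℝ)+(l:ℝ))))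
        ≤ P1 ^ ((m:ℝ)/((m:ℝ)+(l:ℝ))) := by
      have h := Real.rpow_le_rpow (Finset.sum_nonneg fun j _ =>
        Real.rpow_nonneg (Finset.sum_nonneg fun i _ => sq_nonneg _) _) hM1
        (le_of_lt (by positivity : (0:ℝ) < ((m:ℝ)+1)/(2*((m:ℝ)+(l:ℝ)))))
      rw [← Real.rpow_mul hP10] at h
      rw [show sm * (((m:ℝ)+1)/(2*((m:ℝ)+(l:ℝ)))) = (m:ℝ)/((m:ℝ)+(l:ℝ)) from by
        rw [hsm]; field_simp] at h
      exact h
    have hM2' : (∑ i : Fin l → Fin n,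
        (∑ j : Fin m → Fin n, (a j i) ^ 2) ^ ((l:ℝ)/((l:ℝ)+1))) ^ (((l:ℝ)+1)/(2*((m:ℝ)+(l:ℝ))))
        ≤ P2 ^ ((l:ℝ)/((m:ℝ)+(l:ℝ))) := by
      have h := Real.rpow_le_rpow (Finset.sum_nonneg fun i _ =>
        Real.rpow_nonneg (Finset.sum_nonneg fun j _ => sq_nonneg _) _) hM2
        (le_of_lt (by positivity : (0:ℝ) < ((l:ℝ)+1)/(2*((m:ℝ)+(l:ℝ)))))
      rw [← Real.rpow_mul hP20] at h
      rw [show sl * (((l:ℝ)+1)/(2*((m:ℝ)+(l:ℝ)))) = (l:ℝ)/((m:ℝ)+(l:ℝ)) from by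
        rw [hsl]; field_simp] at h
      exact h
    calc (∑ j : Fin m → Fin n,
          (∑ i : Fin l → Fin n, (a j i) ^ 2) ^ ((m:ℝ)/((m:ℝ)+1))) ^ (((m:ℝ)+1)/(2*((m:ℝ)+(l:ℝ))))
        * (∑ i : Fin l → Fin n,
          (∑ j : Fin m → Fin n, (a j i) ^ 2) ^ ((l:ℝ)/((l:ℝ)+1))) ^ (((l:ℝ)+1)/(2*((m:ℝ)+(l:ℝ))))
        ≤ P1 ^ ((m:ℝ)/((m:ℝ)+(l:ℝ))) * P2 ^ ((l:ℝ)/((m:ℝ)+(l:ℝ))) := by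
          refine mul_le_mul hM1' hM2' ?_ ?_
          · exact Real.rpow_nonneg (Finset.sum_nonneg fun i _ =>
              Real.rpow_nonneg (Finset.sum_nonneg fun j _ => sq_nonneg _) _) _
          · exact Real.rpow_nonneg hP10 _
      _ ≤ Real.sqrt 3 ^ (Nat.clog 2 (m + l)) * B := by
          -- expand the two factors
          rw [hP1, hP2]
          rw [Real.mul_rpow (x := (3:ℝ) ^ ((l:ℝ) / (2 * (m:ℝ)))) (y := Dm * B)
              (by positivity) (by positivity),
            Real.mul_rpow (x := (3:ℝ) ^ ((m:ℝ) / (2 * (l:ℝ)))) (y := Dl * B)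
              (by positivity) (by positivity)]
          rw [← Real.rpow_mul (by norm_num : (0:ℝ) ≤ 3)
              ((l:ℝ) / (2 * (m:ℝ))) ((m:ℝ)/((m:ℝ)+(l:ℝ))),
            ← Real.rpow_mul (by norm_num : (0:ℝ) ≤ 3)
              ((m:ℝ) / (2 * (l:ℝ))) ((l:ℝ)/((m:ℝ)+(l:ℝ)))]
          have e1 : (l:ℝ) / (2 * (m:ℝ)) * ((m:ℝ)/((m:ℝ)+(l:ℝ))) = (l:ℝ)/(2*((m:ℝ)+(l:ℝ))) := by
            field_simp
          have e2 : (m:ℝ) / (2 * (l:ℝ)) * ((l:ℝ)/((m:ℝ)+(l:ℝ))) = (m:ℝ)/(2*((m:ℝ)+(l:ℝ))) := by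
            field_simp
          rw [e1, e2]
          have h3 : (3:ℝ) ^ ((l:ℝ)/(2*((m:ℝ)+(l:ℝ)))) * (3:ℝ) ^ ((m:ℝ)/(2*((m:ℝ)+(l:ℝ))))
              = Real.sqrt 3 := by
            rw [← Real.rpow_add (by norm_num : (0:ℝ) < 3)]
            rw [show (l:ℝ)/(2*((m:ℝ)+(l:ℝ))) + (m:ℝ)/(2*((m:ℝ)+(l:ℝ))) = 1/2 from by
              field_simp; ring]
            rw [Real.sqrt_eq_rpow]
          have hDB : (Dm * B) ^ ((m:ℝ)/((m:ℝ)+(l:ℝ))) * (Dl * B) ^ ((l:ℝ)/((m:ℝ)+(l:ℝ)))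
              ≤ Dm * B := by
            have h1 : (Dl * B) ^ ((l:ℝ)/((m:ℝ)+(l:ℝ))) ≤ (Dm * B) ^ ((l:ℝ)/((m:ℝ)+(l:ℝ))) :=
              Real.rpow_le_rpow (by positivity)
                (mul_le_mul_of_nonneg_right hDlm hB0) (by positivity)
            calc (Dm * B) ^ ((m:ℝ)/((m:ℝ)+(l:ℝ))) * (Dl * B) ^ ((l:ℝ)/((m:ℝ)+(l:ℝ)))
                ≤ (Dm * B) ^ ((m:ℝ)/((m:ℝ)+(l:ℝ))) * (Dm * B) ^ ((l:ℝ)/((m:ℝ)+(l:ℝ))) :=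
                  mul_le_mul_of_nonneg_left h1 (Real.rpow_nonneg (by positivity) _)
              _ = (Dm * B) ^ ((m:ℝ)/((m:ℝ)+(l:ℝ)) + (l:ℝ)/((m:ℝ)+(l:ℝ))) :=
                  (Real.rpow_add' (by positivity) (by positivity)).symm
              _ = Dm * B := by
                  rw [show (m:ℝ)/((m:ℝ)+(l:ℝ)) + (l:ℝ)/((m:ℝ)+(l:ℝ)) = 1 from by
                    field_simp]
                  rw [Real.rpow_one]
          calc (3:ℝ) ^ ((l:ℝ)/(2*((m:ℝ)+(l:ℝ)))) * (Dm * B) ^ ((m:ℝ)/((m:ℝ)+(l:ℝ)))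
              * ((3:ℝ) ^ ((m:ℝ)/(2*((m:ℝ)+(l:ℝ)))) * (Dl * B) ^ ((l:ℝ)/((m:ℝ)+(l:ℝ))))
              = ((3:ℝ) ^ ((l:ℝ)/(2*((m:ℝ)+(l:ℝ)))) * (3:ℝ) ^ ((m:ℝ)/(2*((m:ℝ)+(l:ℝ)))))
                * ((Dm * B) ^ ((m:ℝ)/((m:ℝ)+(l:ℝ))) * (Dl * B) ^ ((l:ℝ)/((m:ℝ)+(l:ℝ)))) := by
                ring
            _ ≤ Real.sqrt 3 * (Dm * B) := by
                rw [h3]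
                exact mul_le_mul_of_nonneg_left hDB (Real.sqrt_nonneg 3)
            _ = Real.sqrt 3 ^ (Nat.clog 2 (m + l)) * B := by
                rw [hclog, hDm, pow_succ]
                ring

lemma sqrt3_le_exp : Real.sqrt 3 ≤ Real.exp 1 := by
  have h1 : Real.sqrt 3 ≤ 2 := by
    rw [show (2:ℝ) = Real.sqrt 4 from by
      rw [show (4:ℝ) = 2^2 by norm_num, Real.sqrt_sq (by norm_num : (0:ℝ) ≤ 2)]]
    exact Real.sqrt_le_sqrt (by norm_num)
  have h2 : (2:ℝ) ≤ Real.exp 1 := by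
    have := Real.add_one_le_exp 1
    linarith
  linarith

lemma const_bound (k : ℕ) (hk : 1 ≤ k) :
    Real.sqrt 3 ^ (Nat.clog 2 k) ≤ Real.sqrt 3 * (k:ℝ) ^ (Real.logb 2 (Real.exp 1)) := by
  have hs3 : (0:ℝ) < Real.sqrt 3 := Real.sqrt_pos.mpr (by norm_num)
  have hs31 : (1:ℝ) ≤ Real.sqrt 3 := by
    rw [show (1:ℝ) = Real.sqrt 1 from (Real.sqrt_one).symm]
    exact Real.sqrt_le_sqrt (by norm_num)
  rcases eq_or_lt_of_le hk with h1 | h2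
  · rw [← h1]
    rw [Nat.clog_one_right, pow_zero]
    rw [show ((1:ℕ):ℝ) = (1:ℝ) by norm_num, Real.one_rpow, mul_one]
    exact hs31
  · have hk1 : (1:ℝ) ≤ (k:ℝ) := by exact_mod_cast hk
    have hk0 : (0:ℝ) < (k:ℝ) := by positivity
    have hclogpos : 0 < Nat.clog 2 k := Nat.clog_pos (by norm_num) h2
    set j := Nat.clog 2 k - 1 with hj
    have hjk : (2:ℝ) ^ (j:ℕ) < (k:ℝ) := by
      exact_mod_cast Nat.pow_pred_clog_lt_self (by norm_num) h2
    have hlogj : (j:ℝ) ≤ Real.logb 2 (k:ℝ) := by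
      rw [show (j:ℝ) = Real.logb 2 ((2:ℝ) ^ (j:ℝ)) from
        (Real.logb_rpow (by norm_num) (by norm_num)).symm]
      have h2j : (2:ℝ) ^ (j:ℝ) ≤ (k:ℝ) := by
        rw [Real.rpow_natCast]
        exact le_of_lt hjk
      rw [Real.logb, Real.logb]
      exact (div_le_div_iff_of_pos_right (Real.log_pos (by norm_num))).mpr
        (Real.log_le_log (by positivity) h2j)
    have hswap : Real.sqrt 3 ^ (Real.logb 2 (k:ℝ)) = (k:ℝ) ^ (Real.logb 2 (Real.sqrt 3)) := by
      rw [Real.rpow_def_of_pos hs3, Real.rpow_def_of_pos hk0]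
      simp only [Real.logb]
      congr 1
      ring
    calc Real.sqrt 3 ^ (Nat.clog 2 k) = Real.sqrt 3 * Real.sqrt 3 ^ j := by
          rw [show Nat.clog 2 k = j + 1 from by omega, pow_succ]
          ring
      _ ≤ Real.sqrt 3 * Real.sqrt 3 ^ (Real.logb 2 (k:ℝ)) := by
          refine mul_le_mul_of_nonneg_left ?_ (le_of_lt hs3)
          rw [← Real.rpow_natCast (Real.sqrt 3) j]
          exact Real.rpow_le_rpow_of_exponent_le hs31 hlogj
      _ = Real.sqrt 3 * (k:ℝ) ^ (Real.logb 2 (Real.sqrt 3)) := by rw [hswap]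
      _ ≤ Real.sqrt 3 * (k:ℝ) ^ (Real.logb 2 (Real.exp 1)) := by
          refine mul_le_mul_of_nonneg_left ?_ (le_of_lt hs3)
          refine Real.rpow_le_rpow_of_exponent_le hk1 ?_
          simp only [Real.logb]
          exact (div_le_div_iff_of_pos_right (Real.log_pos (by norm_num))).mpr
            (Real.log_le_log hs3 sqrt3_le_exp)

end BHaux

/-- The Bohnenblust–Hille inequality with polynomial constant (Defant–Popa–Schwarting,
Pellegrino–Seoane-Sepúlveda): there is a universal constant `C > 0` such that for all
`k, n ≥ 1` and every `k`-linear form `f(x¹,…,xᵏ) = ∑ f̂_{i_1,…,i_k} x¹_{i_1} ⋯ xᵏ_{i_k}`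
with coefficients `c = f̂`, writing `B` for any bound on `|f|` over `{±1}ⁿ` inputs
(in particular `B = ‖f‖_∞`),
`(∑ |f̂_{i_1,…,i_k}|^{2k/(k+1)})^{(k+1)/(2k)} ≤ C k^{log₂ e} B`. -/
theorem bohnenblust_hille_polynomial_constant :
    ∃ C : ℝ, 0 < C ∧ ∀ k n : ℕ, 1 ≤ k → 1 ≤ n →
      ∀ c : (Fin k → Fin n) → ℝ, ∀ B : ℝ,
      (∀ x : Fin k → Fin n → Bool,
        |∑ i : Fin k → Fin n, c i * ∏ j, (if x j (i j) then (1 : ℝ) else -1)| ≤ B) →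
      (∑ i : Fin k → Fin n, |c i| ^ (2 * (k : ℝ) / ((k : ℝ) + 1))) ^ (((k : ℝ) + 1) / (2 * (k : ℝ)))
        ≤ C * (k : ℝ) ^ (Real.logb 2 (Real.exp 1)) * B := by
  refine ⟨Real.sqrt 3, Real.sqrt_pos.mpr (by norm_num), ?_⟩
  intro k n hk hn c B hbound
  have hbound' : ∀ x : Fin k → Fin n → Bool,
      |∑ i : Fin k → Fin n, c i * ∏ j, BHaux.bsgn (x j (i j))| ≤ B := fun x => hbound x
  have hB0 : 0 ≤ B := le_trans (abs_nonneg _) (hbound' fun _ _ => true)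
  refine le_trans (BHaux.BH_main k hk n c B hbound') ?_
  exact mul_le_mul_of_nonneg_right (BHaux.const_bound k hk) hB0
end
end

section
/- Let A = (A_{ij}) be a real matrix with finitely many rows and columns, and let m ≥ 1 be a real number. Then (Σ_{i,j} |A_{ij}|^{2m/(m+1)})^{(m+1)/(2m)} ≤ (Σ_i (Σ_j A_{ij}²)^{m/(m+2)})^{(m+2)/(4m)} · (Σ_j (Σ_i A_{ij}²)^{m/(m+2)})^{(m+2)/(4m)}. -/
noncomputable section

open Finset Real

/-- Generalized Minkowski inequality for finite double sums:
`‖∑_j t_{·j}‖_p ≤ ∑_j ‖t_{·j}‖_p` for `p ≥ 1` and nonnegative `t`. -/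
lemma blei_aux_minkowski {ι κ : Type*} [Fintype ι] (t : ι → κ → ℝ)
    (ht : ∀ i j, 0 ≤ t i j) {p : ℝ} (hp : 1 ≤ p) (s : Finset κ) :
    (∑ i, (∑ j ∈ s, t i j) ^ p) ^ (1 / p) ≤ ∑ j ∈ s, (∑ i, t i j ^ p) ^ (1 / p) := by
  have hp0 : p ≠ 0 := by positivity
  induction s using Finset.cons_induction with
  | empty =>
      simp only [Finset.sum_empty, Real.zero_rpow hp0, Finset.sum_const_zero, one_div,
        Real.zero_rpow (inv_ne_zero hp0), le_refl]
  | cons a s ha ih =>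
      simp only [Finset.sum_cons]
      calc (∑ i, (t i a + ∑ j ∈ s, t i j) ^ p) ^ (1 / p)
          ≤ (∑ i, t i a ^ p) ^ (1 / p) + (∑ i, (∑ j ∈ s, t i j) ^ p) ^ (1 / p) :=
            Real.Lp_add_le_of_nonneg Finset.univ hp (fun i _ => ht i a)
              (fun i _ => Finset.sum_nonneg fun j _ => ht i j)
        _ ≤ (∑ i, t i a ^ p) ^ (1 / p) + ∑ j ∈ s, (∑ i, t i j ^ p) ^ (1 / p) := by
            gcongr

set_option maxHeartbeats 1000000 in
/-- The Blei / Defant–Popa–Schwarting mixed-norm inequality: for a real matrix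
`A = (A_{ij})` with finitely many rows and columns and any real `m ≥ 1`,
`(∑_{i,j} |A_{ij}|^{2m/(m+1)})^{(m+1)/(2m)}
  ≤ (∑_i ‖row_i‖₂^{2m/(m+2)})^{(m+2)/(4m)} (∑_j ‖col_j‖₂^{2m/(m+2)})^{(m+2)/(4m)}`,
where `‖row_i‖₂² = ∑_j A_{ij}²` and `‖col_j‖₂² = ∑_i A_{ij}²`. -/
theorem blei_mixed_norm_inequality {ι κ : Type*} [Fintype ι] [Fintype κ]
    (A : ι → κ → ℝ) (m : ℝ) (hm : 1 ≤ m) :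
    (∑ i, ∑ j, |A i j| ^ (2 * m / (m + 1))) ^ ((m + 1) / (2 * m))
      ≤ (∑ i, (Real.sqrt (∑ j, (A i j) ^ 2)) ^ (2 * m / (m + 2))) ^ ((m + 2) / (4 * m)) *
        (∑ j, (Real.sqrt (∑ i, (A i j) ^ 2)) ^ (2 * m / (m + 2))) ^ ((m + 2) / (4 * m)) := by
  have hm0 : (0 : ℝ) < m := lt_of_lt_of_le one_pos hm
  have hm1 : (0 : ℝ) < m + 1 := by linarith
  have hm2 : (0 : ℝ) < m + 2 := by linarith
  set lam : ℝ := m / (m + 1) with hlam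
  set sx : ℝ := 2 * m / (m + 2) with hsx
  set rho : ℝ := (m + 2) / m with hrho
  set alp : ℝ := (m + 2) / (2 * (m + 1)) with halp
  have hlam0 : 0 < lam := by positivity
  have hsx0 : 0 < sx := by positivity
  set T : ι → κ → ℝ := fun i j => |A i j| with hT
  have hT0 : ∀ i j, 0 ≤ T i j := fun i j => abs_nonneg _
  set R2 : ι → ℝ := fun i => ∑ j, (A i j) ^ 2 with hR2
  set C2 : κ → ℝ := fun j => ∑ i, (A i j) ^ 2 with hC2
  have hR20 : ∀ i, 0 ≤ R2 i := fun i => Finset.sum_nonneg fun j _ => sq_nonneg _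
  have hC20 : ∀ j, 0 ≤ C2 j := fun j => Finset.sum_nonneg fun i _ => sq_nonneg _
  -- pointwise facts
  have hT2 : ∀ i j, T i j ^ (2 : ℝ) = (A i j) ^ 2 := by
    intro i j
    rw [show (2 : ℝ) = ((2 : ℕ) : ℝ) by norm_num, Real.rpow_natCast, sq_abs]
  -- Step 1: Hölder in j, for each row i
  have hpq1 : (2 / lam).HolderConjugate (2 / (2 - lam)) := by
    rw [Real.holderConjugate_iff]; constructor
    · have hl2 : lam < 2 := by
        rw [hlam, div_lt_iff₀ hm1]; nlinarith
      rw [lt_div_iff₀ hlam0]; nlinarith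
    · rw [inv_div, inv_div]; ring
  have step1 : ∀ i, ∑ j, T i j ^ (2 * m / (m + 1)) ≤
      (R2 i) ^ (lam / 2) * (∑ j, T i j ^ sx) ^ ((2 - lam) / 2) := by
    intro i
    have h := Real.inner_le_Lp_mul_Lq_of_nonneg Finset.univ
      (f := fun j => T i j ^ lam) (g := fun j => T i j ^ lam) hpq1
      (fun j _ => Real.rpow_nonneg (hT0 i j) _) (fun j _ => Real.rpow_nonneg (hT0 i j) _)
    have e1 : ∑ j, T i j ^ (2 * m / (m + 1)) = ∑ j, T i j ^ lam * T i j ^ lam := by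
      refine Finset.sum_congr rfl fun j _ => ?_
      rw [← Real.rpow_add' (hT0 i j) (by rw [hlam]; positivity)]
      congr 1
      rw [hlam]; ring
    have e2 : ∑ j, (T i j ^ lam) ^ (2 / lam) = R2 i := by
      rw [hR2]
      refine Finset.sum_congr rfl fun j _ => ?_
      rw [← Real.rpow_mul (hT0 i j), show lam * (2 / lam) = (2 : ℝ) by field_simp, hT2]
    have e3 : ∑ j, (T i j ^ lam) ^ (2 / (2 - lam)) = ∑ j, T i j ^ sx := by
      refine Finset.sum_congr rfl fun j _ => ?_
      rw [← Real.rpow_mul (hT0 i j)]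
      congr 1
      rw [hlam, hsx]
      have h2l : 2 - m / (m + 1) = (m + 2) / (m + 1) := by field_simp; ring
      rw [h2l]
      field_simp <;> ring
    have e4 : 1 / (2 / lam) = lam / 2 := one_div_div _ _
    have e5 : 1 / (2 / (2 - lam)) = (2 - lam) / 2 := one_div_div _ _
    rw [e1]
    rw [e2, e3, e4, e5] at h
    exact h
  -- Step 2: Hölder in i
  have hpq2 : (2 * (m + 1) / (m + 2)).HolderConjugate (2 * (m + 1) / m) := by
    rw [Real.holderConjugate_iff]; constructor
    · rw [lt_div_iff₀ hm2]; linarith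
    · rw [inv_div, inv_div]
      field_simp <;> ring
  have hMnn : ∀ i, 0 ≤ (∑ j, T i j ^ sx) ^ ((2 - lam) / 2) :=
    fun i => Real.rpow_nonneg (Finset.sum_nonneg fun j _ => Real.rpow_nonneg (hT0 i j) _) _
  have step2 : ∑ i, (R2 i) ^ (lam / 2) * (∑ j, T i j ^ sx) ^ ((2 - lam) / 2) ≤
      (∑ i, (R2 i) ^ (m / (m + 2))) ^ alp *
      (∑ i, (∑ j, T i j ^ sx) ^ rho) ^ (m / (2 * (m + 1))) := by
    have h := Real.inner_le_Lp_mul_Lq_of_nonneg Finset.univ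
      (f := fun i => (R2 i) ^ (lam / 2))
      (g := fun i => (∑ j, T i j ^ sx) ^ ((2 - lam) / 2)) hpq2
      (fun i _ => Real.rpow_nonneg (hR20 i) _) (fun i _ => hMnn i)
    have e2 : ∑ i, ((R2 i) ^ (lam / 2)) ^ (2 * (m + 1) / (m + 2)) =
        ∑ i, (R2 i) ^ (m / (m + 2)) := by
      refine Finset.sum_congr rfl fun i _ => ?_
      rw [← Real.rpow_mul (hR20 i)]
      congr 1
      rw [hlam]
      field_simp <;> ring
    have e3 : ∑ i, ((∑ j, T i j ^ sx) ^ ((2 - lam) / 2)) ^ (2 * (m + 1) / m) =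
        ∑ i, (∑ j, T i j ^ sx) ^ rho := by
      refine Finset.sum_congr rfl fun i _ => ?_
      rw [← Real.rpow_mul (Finset.sum_nonneg fun j _ => Real.rpow_nonneg (hT0 i j) _)]
      congr 1
      rw [hlam, hrho]
      have h2l : 2 - m / (m + 1) = (m + 2) / (m + 1) := by field_simp; ring
      rw [h2l]
      field_simp <;> ring
    have e4 : 1 / (2 * (m + 1) / (m + 2)) = alp := by rw [halp, one_div_div]
    have e5 : 1 / (2 * (m + 1) / m) = m / (2 * (m + 1)) := one_div_div _ _
    rw [e2, e3, e4, e5] at h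
    exact h
  -- Step 3: Minkowski
  have hrho1 : (1 : ℝ) ≤ rho := by
    rw [hrho, le_div_iff₀ hm0]; linarith
  have step3 : ∑ i, (∑ j, T i j ^ sx) ^ rho ≤ (∑ j, (C2 j) ^ (m / (m + 2))) ^ rho := by
    have hmink := blei_aux_minkowski (fun i j => T i j ^ sx)
      (fun i j => Real.rpow_nonneg (hT0 i j) _) hrho1 Finset.univ
    have e1 : ∑ j, (∑ i, (T i j ^ sx) ^ rho) ^ (1 / rho) =
        ∑ j, (C2 j) ^ (m / (m + 2)) := by
      refine Finset.sum_congr rfl fun j _ => ?_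
      have einner : ∑ i, (T i j ^ sx) ^ rho = C2 j := by
        rw [hC2]
        refine Finset.sum_congr rfl fun i _ => ?_
        rw [← Real.rpow_mul (hT0 i j), show sx * rho = (2 : ℝ) by rw [hsx, hrho]; field_simp <;> ring,
          hT2]
      rw [einner]
      congr 1
      rw [hrho, one_div_div]
    rw [e1] at hmink
    have hbase : 0 ≤ ∑ i, (∑ j, T i j ^ sx) ^ rho :=
      Finset.sum_nonneg fun i _ =>
        Real.rpow_nonneg (Finset.sum_nonneg fun j _ => Real.rpow_nonneg (hT0 i j) _) _
    have := Real.rpow_le_rpow (Real.rpow_nonneg hbase _) hmink (le_of_lt (by positivity : (0:ℝ) < rho))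
    rwa [← Real.rpow_mul hbase, one_div_mul_cancel (by positivity : rho ≠ 0), Real.rpow_one] at this
  -- combine: the double sum is bounded by R^alp * C^alp
  have hRnn : 0 ≤ ∑ i, (R2 i) ^ (m / (m + 2)) :=
    Finset.sum_nonneg fun i _ => Real.rpow_nonneg (hR20 i) _
  have hCnn : 0 ≤ ∑ j, (C2 j) ^ (m / (m + 2)) :=
    Finset.sum_nonneg fun j _ => Real.rpow_nonneg (hC20 j) _
  have main : ∑ i, ∑ j, T i j ^ (2 * m / (m + 1)) ≤
      (∑ i, (R2 i) ^ (m / (m + 2))) ^ alp * (∑ j, (C2 j) ^ (m / (m + 2))) ^ alp := by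
    calc ∑ i, ∑ j, T i j ^ (2 * m / (m + 1))
        ≤ ∑ i, (R2 i) ^ (lam / 2) * (∑ j, T i j ^ sx) ^ ((2 - lam) / 2) :=
          Finset.sum_le_sum fun i _ => step1 i
      _ ≤ (∑ i, (R2 i) ^ (m / (m + 2))) ^ alp *
            (∑ i, (∑ j, T i j ^ sx) ^ rho) ^ (m / (2 * (m + 1))) := step2
      _ ≤ (∑ i, (R2 i) ^ (m / (m + 2))) ^ alp *
            ((∑ j, (C2 j) ^ (m / (m + 2))) ^ rho) ^ (m / (2 * (m + 1))) := by
          refine mul_le_mul_of_nonneg_left ?_ (Real.rpow_nonneg hRnn _)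
          exact Real.rpow_le_rpow
            (Finset.sum_nonneg fun i _ => Real.rpow_nonneg
              (Finset.sum_nonneg fun j _ => Real.rpow_nonneg (hT0 i j) _) _)
            step3 (by positivity)
      _ = (∑ i, (R2 i) ^ (m / (m + 2))) ^ alp * (∑ j, (C2 j) ^ (m / (m + 2))) ^ alp := by
          rw [← Real.rpow_mul hCnn]
          congr 1
          rw [hrho, halp]
          field_simp <;> ring
  -- rewrite the goal's sqrt-expressions
  have esqrtR : ∑ i, (Real.sqrt (∑ j, (A i j) ^ 2)) ^ (2 * m / (m + 2)) =
      ∑ i, (R2 i) ^ (m / (m + 2)) := by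
    refine Finset.sum_congr rfl fun i _ => ?_
    rw [Real.sqrt_eq_rpow, ← Real.rpow_mul (hR20 i)]
    congr 1
    field_simp <;> ring
  have esqrtC : ∑ j, (Real.sqrt (∑ i, (A i j) ^ 2)) ^ (2 * m / (m + 2)) =
      ∑ j, (C2 j) ^ (m / (m + 2)) := by
    refine Finset.sum_congr rfl fun j _ => ?_
    rw [Real.sqrt_eq_rpow, ← Real.rpow_mul (hC20 j)]
    congr 1
    field_simp <;> ring
  rw [esqrtR, esqrtC]
  have hSnn : 0 ≤ ∑ i, ∑ j, T i j ^ (2 * m / (m + 1)) :=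
    Finset.sum_nonneg fun i _ => Finset.sum_nonneg fun j _ => Real.rpow_nonneg (hT0 i j) _
  have hfin := Real.rpow_le_rpow hSnn main
    (le_of_lt (by positivity : (0 : ℝ) < (m + 1) / (2 * m)))
  calc (∑ i, ∑ j, |A i j| ^ (2 * m / (m + 1))) ^ ((m + 1) / (2 * m))
      ≤ ((∑ i, (R2 i) ^ (m / (m + 2))) ^ alp * (∑ j, (C2 j) ^ (m / (m + 2))) ^ alp) ^
          ((m + 1) / (2 * m)) := hfin
    _ = (∑ i, (R2 i) ^ (m / (m + 2))) ^ ((m + 2) / (4 * m)) *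
        (∑ j, (C2 j) ^ (m / (m + 2))) ^ ((m + 2) / (4 * m)) := by
        rw [Real.mul_rpow (Real.rpow_nonneg hRnn _) (Real.rpow_nonneg hCnn _),
          ← Real.rpow_mul hRnn, ← Real.rpow_mul hCnn]
        congr 2 <;> (rw [halp]; field_simp <;> ring)
end
end
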